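/- arXiv:2603.23741 — 8 statements merged into one kernel-verified Lean document; each statement's English description precedes it below -/
import Mathlib

section
/- Let (P, w, d) be weighted differential. Then there is no point p of P that is covered by three distinct orphans; that is, there do not exist a point p and three pairwise distinct points a₁, a₂, a₃ of P such that each aᵢ covers exactly p. -/
set_option maxHeartbeats 1000000


/-- A finite lower set of a poset: a finite set closed downward. -/
def IsFinLowerSet {P : Type*} [PartialOrder P] (I : Set P) : Prop :=
  I.Finite ∧ ∀ ⦃q p : P⦄, q ≤ p → p ∈ I → q ∈ I

/-- The insertion points of a set `I`: the points not in `I` all of whose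
strict lower bounds lie in `I` (the minimal elements of the complement). -/
def insPts {P : Type*} [PartialOrder P] (I : Set P) : Set P :=
  {x | x ∉ I ∧ ∀ y : P, y < x → y ∈ I}

/-- The deletion points of a set `I`: its maximal elements. -/
def delPts {P : Type*} [PartialOrder P] (I : Set P) : Set P :=
  {x | x ∈ I ∧ ∀ y ∈ I, ¬ x < y}

/-- `(P, w, d)` is weighted differential: every principal lower set is finite,
all weights are positive, `d` is positive, and for every finite lower set `I`
the set of insertion points is finite and the total weight of insertion points
equals the total weight of deletion points plus `d`. -/
def WeightedDifferential {P : Type*} [PartialOrder P] (w : P → ℤ) (d : ℤ) : Prop :=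
  (∀ p : P, {q : P | q ≤ p}.Finite) ∧ (∀ p : P, 0 < w p) ∧ 0 < d ∧
    ∀ I : Set P, IsFinLowerSet I →
      (insPts I).Finite ∧ (∑ᶠ x ∈ insPts I, w x) = (∑ᶠ x ∈ delPts I, w x) + d

/-- `a` covers exactly `p`: the set of lower covers of `a` is precisely `{p}`. -/
def CoversExactly {P : Type*} [PartialOrder P] (a p : P) : Prop :=
  {x : P | x ⋖ a} = {p}

lemma coversExactly_covBy {P : Type*} [PartialOrder P] {a p : P}
    (h : CoversExactly a p) : p ⋖ a := by
  have : p ∈ {x : P | x ⋖ a} := by rw [h]; rfl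
  exact this

/-- In a poset with finite principal lower sets, anything strictly below a point
covering exactly `p` is `≤ p`. -/
lemma coversExactly_le_of_lt {P : Type*} [PartialOrder P]
    (hf : ∀ q : P, {r : P | r ≤ q}.Finite) {a p : P}
    (h : CoversExactly a p) {y : P} (hy : y < a) : y ≤ p := by
  classical
  have hfin : {z : P | y ≤ z ∧ z < a}.Finite :=
    (hf a).subset (fun z hz => hz.2.le)
  have hymem : y ∈ hfin.toFinset := by
    simp only [Set.Finite.mem_toFinset, Set.mem_setOf_eq]
    exact ⟨le_rfl, hy⟩
  obtain ⟨m, hm, hmax⟩ := hfin.toFinset.exists_maximal ⟨y, hymem⟩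
  simp only [Set.Finite.mem_toFinset, Set.mem_setOf_eq] at hm
  have hcov : m ⋖ a := by
    refine ⟨hm.2, fun u hmu hua => ?_⟩
    exact hmu.not_ge (hmax (by
      simp only [Set.Finite.mem_toFinset, Set.mem_setOf_eq]
      exact ⟨hm.1.trans hmu.le, hua⟩) hmu.le)
  have hmp : m ∈ ({p} : Set P) := by rw [← h]; exact hcov
  rw [Set.mem_singleton_iff] at hmp
  exact hmp ▸ hm.1

/-- In a weighted differential poset, no point is covered
by three distinct orphans. -/
theorem no_point_covered_by_three_orphans {P : Type*} [PartialOrder P]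
    (w : P → ℤ) (d : ℤ) (h : WeightedDifferential w d) :
    ¬ ∃ (p a₁ a₂ a₃ : P), a₁ ≠ a₂ ∧ a₁ ≠ a₃ ∧ a₂ ≠ a₃ ∧
      CoversExactly a₁ p ∧ CoversExactly a₂ p ∧ CoversExactly a₃ p := by
  classical
  rintro ⟨p, a₁, a₂, a₃, h12, h13, h23, c1, c2, c3⟩
  obtain ⟨hfin, hw, hd, hI⟩ := h
  have hp1 : p < a₁ := (coversExactly_covBy c1).lt
  have hp2 : p < a₂ := (coversExactly_covBy c2).lt
  have hp3 : p < a₃ := (coversExactly_covBy c3).lt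
  have hb1 : ∀ y, y < a₁ → y ≤ p := fun y hy => coversExactly_le_of_lt hfin c1 hy
  have hb2 : ∀ y, y < a₂ → y ≤ p := fun y hy => coversExactly_le_of_lt hfin c2 hy
  have hb3 : ∀ y, y < a₃ → y ≤ p := fun y hy => coversExactly_le_of_lt hfin c3 hy
  have hnp1 : ¬ a₁ ≤ p := hp1.not_ge
  have hnp2 : ¬ a₂ ≤ p := hp2.not_ge
  have hnp3 : ¬ a₃ ≤ p := hp3.not_ge
  have hn12 : ¬ a₁ < a₂ := fun hlt => hnp1 (hb2 _ hlt)
  have hn21 : ¬ a₂ < a₁ := fun hlt => hnp2 (hb1 _ hlt)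
  have hn13 : ¬ a₁ < a₃ := fun hlt => hnp1 (hb3 _ hlt)
  have hn31 : ¬ a₃ < a₁ := fun hlt => hnp3 (hb1 _ hlt)
  have hn23 : ¬ a₂ < a₃ := fun hlt => hnp2 (hb3 _ hlt)
  have hn32 : ¬ a₃ < a₂ := fun hlt => hnp3 (hb2 _ hlt)
  -- generic facts about the lower sets `{q | q ≤ p} ∪ S`
  have lower : ∀ S : Set P, S.Finite → (∀ a ∈ S, ∀ y, y < a → y ≤ p) →
      IsFinLowerSet ({q : P | q ≤ p} ∪ S) := by
    intro S hSf hSb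
    refine ⟨(hfin p).union hSf, ?_⟩
    intro q r hqr hr
    rcases hr with hr | hr
    · exact Or.inl (hqr.trans hr)
    · rcases eq_or_lt_of_le hqr with rfl | hlt
      · exact Or.inr hr
      · exact Or.inl (hSb r hr q hlt)
  have del0 : delPts ({q : P | q ≤ p} ∪ (∅ : Set P)) = {p} := by
    rw [Set.union_empty]
    ext x
    constructor
    · rintro ⟨hx, hmax⟩
      by_contra hne
      exact hmax p (le_refl p) (lt_of_le_of_ne hx hne)
    · rintro rfl
      exact ⟨le_rfl, fun y hy hlt => hlt.not_ge hy⟩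
  have delS : ∀ S : Set P, (∀ a ∈ S, p < a) → (∀ a ∈ S, ∀ y, y < a → y ≤ p) →
      S.Nonempty → delPts ({q : P | q ≤ p} ∪ S) = S := by
    rintro S hpS hSb ⟨a₀, ha₀⟩
    ext x
    constructor
    · rintro ⟨hx | hx, hmax⟩
      · exact absurd (hx.trans_lt (hpS a₀ ha₀)) (hmax a₀ (Or.inr ha₀))
      · exact hx
    · intro hx
      refine ⟨Or.inr hx, ?_⟩
      rintro y (hy | hy) hlt
      · exact lt_asymm (hpS x hx) (hlt.trans_le hy)
      · exact (hpS x hx).not_ge (hSb y hy x hlt)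
  -- characterization of insertion points of `{q | q ≤ p} ∪ S` for `S ⊆ {a₁,a₂,a₃}`
  have inschar : ∀ S : Set P, (∀ a ∈ S, a = a₁ ∨ a = a₂ ∨ a = a₃) → ∀ x : P,
      (x ∈ insPts ({q : P | q ≤ p} ∪ S) ↔
        ¬ x ≤ p ∧ x ∉ S ∧ (∀ y, y < x → y ≤ p ∨ y = a₁ ∨ y = a₂ ∨ y = a₃) ∧
          (a₁ < x → a₁ ∈ S) ∧ (a₂ < x → a₂ ∈ S) ∧ (a₃ < x → a₃ ∈ S)) := by
    intro S hSsub x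
    constructor
    · rintro ⟨hnot, hbelow⟩
      have hx1 : ¬ x ≤ p := fun hle => hnot (Or.inl hle)
      have hx2 : x ∉ S := fun hxS => hnot (Or.inr hxS)
      refine ⟨hx1, hx2, ?_, ?_, ?_, ?_⟩
      · intro y hy
        rcases hbelow y hy with hy' | hy'
        · exact Or.inl hy'
        · exact Or.inr (hSsub y hy')
      · intro hlt
        rcases hbelow a₁ hlt with hle | hmem
        · exact absurd hle hnp1
        · exact hmem
      · intro hlt
        rcases hbelow a₂ hlt with hle | hmem
        · exact absurd hle hnp2
        · exact hmem
      · intro hlt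
        rcases hbelow a₃ hlt with hle | hmem
        · exact absurd hle hnp3
        · exact hmem
    · rintro ⟨hx1, hx2, hB, hi1, hi2, hi3⟩
      refine ⟨?_, ?_⟩
      · rintro (hle | hmem)
        · exact hx1 hle
        · exact hx2 hmem
      · intro y hy
        rcases hB y hy with hle | rfl | rfl | rfl
        · exact Or.inl hle
        · exact Or.inr (hi1 hy)
        · exact Or.inr (hi2 hy)
        · exact Or.inr (hi3 hy)
  -- the eight lower sets
  have hsub : ∀ S : Set P, S ⊆ {a₁, a₂, a₃} → ∀ a ∈ S, ∀ y, y < a → y ≤ p := by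
    intro S hS a ha
    rcases hS ha with rfl | rfl | rfl
    exacts [hb1, hb2, hb3]
  have hup : ∀ S : Set P, S ⊆ {a₁, a₂, a₃} → ∀ a ∈ S, p < a := by
    intro S hS a ha
    rcases hS ha with rfl | rfl | rfl
    exacts [hp1, hp2, hp3]
  have hmem3 : ∀ S : Set P, S ⊆ {a₁, a₂, a₃} → ∀ a ∈ S, a = a₁ ∨ a = a₂ ∨ a = a₃ := by
    intro S hS a ha
    exact hS ha
  -- the eight lower sets and their insertion-point equations
  have sub1 : ({a₁} : Set P) ⊆ {a₁, a₂, a₃} := by intro x hx; simp at hx; simp [hx]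
  have sub2 : ({a₂} : Set P) ⊆ {a₁, a₂, a₃} := by intro x hx; simp at hx; simp [hx]
  have sub3 : ({a₃} : Set P) ⊆ {a₁, a₂, a₃} := by intro x hx; simp at hx; simp [hx]
  have sub12 : ({a₁, a₂} : Set P) ⊆ {a₁, a₂, a₃} := by
    intro x hx; simp only [Set.mem_insert_iff, Set.mem_singleton_iff] at hx ⊢; tauto
  have sub13 : ({a₁, a₃} : Set P) ⊆ {a₁, a₂, a₃} := by
    intro x hx; simp only [Set.mem_insert_iff, Set.mem_singleton_iff] at hx ⊢; tauto
  have sub23 : ({a₂, a₃} : Set P) ⊆ {a₁, a₂, a₃} := by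
    intro x hx; simp only [Set.mem_insert_iff, Set.mem_singleton_iff] at hx ⊢; tauto
  have sub123 : ({a₁, a₂, a₃} : Set P) ⊆ {a₁, a₂, a₃} := le_refl _
  have E0 := hI ({q : P | q ≤ p} ∪ (∅ : Set P))
    (lower ∅ Set.finite_empty (by simp))
  have E1 := hI ({q : P | q ≤ p} ∪ {a₁})
    (lower _ (Set.finite_singleton _) (hsub _ sub1))
  have E2 := hI ({q : P | q ≤ p} ∪ {a₂})
    (lower _ (Set.finite_singleton _) (hsub _ sub2))
  have E3 := hI ({q : P | q ≤ p} ∪ {a₃})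
    (lower _ (Set.finite_singleton _) (hsub _ sub3))
  have E12 := hI ({q : P | q ≤ p} ∪ {a₁, a₂})
    (lower _ (Set.toFinite _) (hsub _ sub12))
  have E13 := hI ({q : P | q ≤ p} ∪ {a₁, a₃})
    (lower _ (Set.toFinite _) (hsub _ sub13))
  have E23 := hI ({q : P | q ≤ p} ∪ {a₂, a₃})
    (lower _ (Set.toFinite _) (hsub _ sub23))
  have E123 := hI ({q : P | q ≤ p} ∪ {a₁, a₂, a₃})
    (lower _ (Set.toFinite _) (hsub _ sub123))
  -- compute the deletion-point sums
  rw [del0, finsum_mem_singleton] at E0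
  rw [delS _ (hup _ sub1) (hsub _ sub1) ⟨a₁, rfl⟩, finsum_mem_singleton] at E1
  rw [delS _ (hup _ sub2) (hsub _ sub2) ⟨a₂, rfl⟩, finsum_mem_singleton] at E2
  rw [delS _ (hup _ sub3) (hsub _ sub3) ⟨a₃, rfl⟩, finsum_mem_singleton] at E3
  rw [delS _ (hup _ sub12) (hsub _ sub12) ⟨a₁, by simp⟩, finsum_mem_pair h12] at E12
  rw [delS _ (hup _ sub13) (hsub _ sub13) ⟨a₁, by simp⟩, finsum_mem_pair h13] at E13
  rw [delS _ (hup _ sub23) (hsub _ sub23) ⟨a₂, by simp⟩, finsum_mem_pair h23] at E23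
  rw [delS _ (hup _ sub123) (hsub _ sub123) ⟨a₁, by simp⟩,
    finsum_mem_insert w (by simp [h12, h13]) (Set.toFinite _),
    finsum_mem_pair h23] at E123
  -- a common finite index set
  set T : Finset P := E0.1.toFinset ∪ E1.1.toFinset ∪ E2.1.toFinset ∪ E3.1.toFinset ∪
    E12.1.toFinset ∪ E13.1.toFinset ∪ E23.1.toFinset ∪ E123.1.toFinset with hT
  have conv : ∀ (s : Set P) (hs : s.Finite), hs.toFinset ⊆ T →
      (∑ᶠ x ∈ s, w x) = ∑ x ∈ T, if x ∈ s then w x else 0 := by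
    intro s hs hsT
    rw [finsum_mem_eq_finite_toFinset_sum _ hs]
    have hfil : hs.toFinset = T.filter (· ∈ s) := by
      ext a
      simp only [Finset.mem_filter, Set.Finite.mem_toFinset]
      exact ⟨fun ha => ⟨hsT (hs.mem_toFinset.2 ha), ha⟩, fun ha => ha.2⟩
    rw [hfil, Finset.sum_filter]
  have sT0 : E0.1.toFinset ⊆ T := by intro x hx; simp only [hT, Finset.mem_union]; tauto
  have sT1 : E1.1.toFinset ⊆ T := by intro x hx; simp only [hT, Finset.mem_union]; tauto
  have sT2 : E2.1.toFinset ⊆ T := by intro x hx; simp only [hT, Finset.mem_union]; tauto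
  have sT3 : E3.1.toFinset ⊆ T := by intro x hx; simp only [hT, Finset.mem_union]; tauto
  have sT12 : E12.1.toFinset ⊆ T := by intro x hx; simp only [hT, Finset.mem_union]; tauto
  have sT13 : E13.1.toFinset ⊆ T := by intro x hx; simp only [hT, Finset.mem_union]; tauto
  have sT23 : E23.1.toFinset ⊆ T := by intro x hx; simp only [hT, Finset.mem_union]; tauto
  have sT123 : E123.1.toFinset ⊆ T := by intro x hx; simp only [hT, Finset.mem_union]; tauto
  rw [conv _ E0.1 sT0] at E0
  rw [conv _ E1.1 sT1] at E1
  rw [conv _ E2.1 sT2] at E2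
  rw [conv _ E3.1 sT3] at E3
  rw [conv _ E12.1 sT12] at E12
  rw [conv _ E13.1 sT13] at E13
  rw [conv _ E23.1 sT23] at E23
  rw [conv _ E123.1 sT123] at E123
  -- the pointwise signed-count inequality
  have key : ∀ x ∈ T,
      (if x ∈ insPts ({q : P | q ≤ p} ∪ (∅ : Set P)) then w x else 0)
      - (if x ∈ insPts ({q : P | q ≤ p} ∪ {a₁}) then w x else 0)
      - (if x ∈ insPts ({q : P | q ≤ p} ∪ {a₂}) then w x else 0)
      - (if x ∈ insPts ({q : P | q ≤ p} ∪ {a₃}) then w x else 0)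
      + (if x ∈ insPts ({q : P | q ≤ p} ∪ {a₁, a₂}) then w x else 0)
      + (if x ∈ insPts ({q : P | q ≤ p} ∪ {a₁, a₃}) then w x else 0)
      + (if x ∈ insPts ({q : P | q ≤ p} ∪ {a₂, a₃}) then w x else 0)
      - (if x ∈ insPts ({q : P | q ≤ p} ∪ {a₁, a₂, a₃}) then w x else 0) ≤ 0 := by
    intro x _
    have hwx := hw x
    simp only [inschar ∅ (by simp) x, inschar {a₁} (hmem3 _ sub1) x,
      inschar {a₂} (hmem3 _ sub2) x, inschar {a₃} (hmem3 _ sub3) x,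
      inschar {a₁, a₂} (hmem3 _ sub12) x, inschar {a₁, a₃} (hmem3 _ sub13) x,
      inschar {a₂, a₃} (hmem3 _ sub23) x, inschar {a₁, a₂, a₃} (hmem3 _ sub123) x]
    by_cases hxp : x ≤ p
    · simp [hxp]
    by_cases hB : ∀ y, y < x → y ≤ p ∨ y = a₁ ∨ y = a₂ ∨ y = a₃
    swap
    · simp [hB]
    have hB' : (∀ y, y < x → y ≤ p ∨ y = a₁ ∨ y = a₂ ∨ y = a₃) = True := eq_true hB
    by_cases hx1 : x = a₁
    · subst hx1
      simp [hxp, hB', h12, h13, lt_irrefl, hn21, hn31]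
    by_cases hx2 : x = a₂
    · subst hx2
      simp [hxp, hB', Ne.symm h12, h23, lt_irrefl, hn12, hn32]
    by_cases hx3 : x = a₃
    · subst hx3
      simp [hxp, hB', Ne.symm h13, Ne.symm h23, lt_irrefl, hn13, hn23]
    by_cases hl1 : a₁ < x <;> by_cases hl2 : a₂ < x <;> by_cases hl3 : a₃ < x <;>
      simp [hxp, hB', hx1, hx2, hx3, hl1, hl2, hl3, h12, h13, h23,
        Ne.symm h12, Ne.symm h13, Ne.symm h23] <;> omega
  have hsum : ∑ x ∈ T,
      ((if x ∈ insPts ({q : P | q ≤ p} ∪ (∅ : Set P)) then w x else 0)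
      - (if x ∈ insPts ({q : P | q ≤ p} ∪ {a₁}) then w x else 0)
      - (if x ∈ insPts ({q : P | q ≤ p} ∪ {a₂}) then w x else 0)
      - (if x ∈ insPts ({q : P | q ≤ p} ∪ {a₃}) then w x else 0)
      + (if x ∈ insPts ({q : P | q ≤ p} ∪ {a₁, a₂}) then w x else 0)
      + (if x ∈ insPts ({q : P | q ≤ p} ∪ {a₁, a₃}) then w x else 0)
      + (if x ∈ insPts ({q : P | q ≤ p} ∪ {a₂, a₃}) then w x else 0)
      - (if x ∈ insPts ({q : P | q ≤ p} ∪ {a₁, a₂, a₃}) then w x else 0)) ≤ 0 :=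
    Finset.sum_nonpos key
  simp only [Finset.sum_sub_distrib, Finset.sum_add_distrib] at hsum
  linarith only [hsum, E0.2, E1.2, E2.2, E3.2, E12.2, E13.2, E23.2, E123.2, hw p]
end

section
/- Let (P, w, d) be weighted differential, let p ∈ P, and let a be a point that covers exactly p. Then the set of points covering exactly a is finite and the sum of the weights of the points covering exactly a equals 2·w(a) − w(p). -/
lemma exists_le_covby {P : Type*} [PartialOrder P]
    (hfin : ∀ p : P, {q : P | q ≤ p}.Finite) {y x : P} (hyx : y < x) :
    ∃ z, y ≤ z ∧ z ⋖ x := by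
  have hS : {z : P | y ≤ z ∧ z < x}.Finite :=
    (hfin x).subset (fun z hz => hz.2.le)
  obtain ⟨z, hz, hmax⟩ := Set.Finite.exists_maximalFor id _ hS ⟨y, le_refl y, hyx⟩
  refine ⟨z, hz.1, hz.2, fun u hzu hux => ?_⟩
  exact absurd (le_antisymm hzu.le (hmax (j := u) ⟨hz.1.trans hzu.le, hux⟩ hzu.le)) hzu.ne

/-- In a weighted differential poset, if `a` covers exactly
`p`, then the set of points covering exactly `a` is finite and the sum of
their weights equals `2 * w a - w p`. -/
theorem sum_covers_exactly_orphan {P : Type*} [PartialOrder P]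
    (w : P → ℤ) (d : ℤ) (h : WeightedDifferential w d)
    (p a : P) (ha : CoversExactly a p) :
    {b : P | CoversExactly b a}.Finite ∧
      (∑ᶠ b ∈ {b : P | CoversExactly b a}, w b) = 2 * w a - w p := by
  obtain ⟨hfin, hw, hd, hrel⟩ := h
  have hpa : p ⋖ a := by
    have : p ∈ ({p} : Set P) := rfl
    rw [← ha] at this; exact this
  -- every strict lower bound of a is ≤ p
  have strictBelow : ∀ y : P, y < a ↔ y ≤ p := by
    intro y
    constructor
    · intro hy
      obtain ⟨z, hyz, hz⟩ := exists_le_covby hfin hy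
      have : z ∈ ({p} : Set P) := ha ▸ hz
      exact hyz.trans (le_of_eq this)
    · intro hy; exact lt_of_le_of_lt hy hpa.lt
  set Lp : Set P := {q | q ≤ p} with hLp
  set La : Set P := {q | q ≤ a} with hLa
  have sLp : IsFinLowerSet Lp := ⟨hfin p, fun q r hqr hr => hqr.trans hr⟩
  have sLa : IsFinLowerSet La := ⟨hfin a, fun q r hqr hr => hqr.trans hr⟩
  have dLp : delPts Lp = {p} := by
    ext x
    constructor
    · rintro ⟨hx, hmax⟩
      by_contra hne
      exact hmax p (le_refl p) (lt_of_le_of_ne hx hne)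
    · rintro rfl
      exact ⟨le_refl x, fun y hy hlt => absurd (hlt.trans_le hy) (lt_irrefl x)⟩
  have dLa : delPts La = {a} := by
    ext x
    constructor
    · rintro ⟨hx, hmax⟩
      by_contra hne
      exact hmax a (le_refl a) (lt_of_le_of_ne hx hne)
    · rintro rfl
      exact ⟨le_refl x, fun y hy hlt => absurd (hlt.trans_le hy) (lt_irrefl x)⟩
  have haLp : a ∈ insPts Lp := by
    refine ⟨fun hc => absurd (hpa.lt.trans_le hc) (lt_irrefl p), fun y hy => ?_⟩
    exact (strictBelow y).mp hy
  set C : Set P := {b : P | CoversExactly b a} with hC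
  -- decomposition
  have decomp : insPts La = C ∪ (insPts Lp \ {a}) := by
    ext x
    constructor
    · rintro ⟨hx, hlow⟩
      by_cases hax : a < x
      · left
        have hcov : a ⋖ x := ⟨hax, fun u hau hux => (hau.trans_le (hlow u hux)).ne rfl⟩
        show {z : P | z ⋖ x} = {a}
        ext z
        constructor
        · rintro ⟨hzx, hmid⟩
          have hza : z ≤ a := hlow z hzx
          rcases lt_or_eq_of_le hza with hlt | heq
          · exact absurd hax (hmid hlt)
          · exact heq
        · rintro rfl; exact hcov
      · right
        constructor
        · refine ⟨fun hxp => hx (hxp.trans hpa.lt.le), fun y hy => ?_⟩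
          have hya : y ≤ a := hlow y hy
          rcases lt_or_eq_of_le hya with hlt | heq
          · exact (strictBelow y).mp hlt
          · exact absurd (heq ▸ hy) hax
        · rintro rfl; exact hx (le_refl x)
    · rintro (hx | ⟨⟨hxLp, hlow⟩, hxa⟩)
      · have hax : a ⋖ x := by
          have : a ∈ ({a} : Set P) := rfl
          rw [← hx] at this; exact this
        refine ⟨fun hc => absurd (hax.lt.trans_le hc) (lt_irrefl a), fun y hy => ?_⟩
        obtain ⟨z, hyz, hz⟩ := exists_le_covby hfin hy
        have : z ∈ ({a} : Set P) := hx ▸ hz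
        exact hyz.trans (le_of_eq this)
      · refine ⟨fun hc => ?_, fun y hy => (hlow y hy).trans hpa.lt.le⟩
        rcases lt_or_eq_of_le hc with hlt | heq
        · exact hxLp ((strictBelow x).mp hlt)
        · exact hxa (by simpa using heq)
  have hdisj : Disjoint C (insPts Lp \ {a}) := by
    rw [Set.disjoint_left]
    rintro x hxC ⟨⟨_, hlow⟩, _⟩
    have hax : a ⋖ x := by
      have : a ∈ ({a} : Set P) := rfl
      rw [← hxC] at this; exact this
    exact absurd (hlow a hax.lt) (fun hap => (hap.trans_lt hpa.lt).ne rfl)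
  obtain ⟨finIa, eqIa⟩ := hrel La sLa
  obtain ⟨finIp, eqIp⟩ := hrel Lp sLp
  have finC : C.Finite := (finIa.subset (by rw [decomp]; exact Set.subset_union_left))
  have finD : (insPts Lp \ {a}).Finite := finIp.diff
  refine ⟨finC, ?_⟩
  rw [dLa, finsum_mem_singleton] at eqIa
  rw [dLp, finsum_mem_singleton] at eqIp
  have split1 : (∑ᶠ x ∈ insPts La, w x) = (∑ᶠ x ∈ C, w x) + ∑ᶠ x ∈ insPts Lp \ {a}, w x := by
    rw [decomp]; exact finsum_mem_union hdisj finC finD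
  have split2 : (∑ᶠ x ∈ insPts Lp, w x) = w a + ∑ᶠ x ∈ insPts Lp \ {a}, w x := by
    have : insPts Lp = insert a (insPts Lp \ {a}) := by
      rw [Set.insert_diff_singleton, Set.insert_eq_self.mpr haLp]
    conv_lhs => rw [this]
    rw [finsum_mem_insert w (by simp) finD]
  rw [eqIa, eqIp] at *
  have : w a + d = (∑ᶠ x ∈ C, w x) + ∑ᶠ x ∈ insPts Lp \ {a}, w x := split1
  have h2 : w p + d = w a + ∑ᶠ x ∈ insPts Lp \ {a}, w x := split2
  linarith
end

section
/- Let (P, w, d) be weighted differential, let p ∈ P, and let a be a point that covers exactly p. Then w(p) ≤ 2·w(a). -/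
/-- In a weighted differential poset, if `a` covers exactly
`p`, then `w p ≤ 2 * w a`. -/
theorem weight_le_two_mul_of_covers_exactly {P : Type*} [PartialOrder P]
    (w : P → ℤ) (d : ℤ) (h : WeightedDifferential w d)
    (p a : P) (ha : CoversExactly a p) :
    w p ≤ 2 * w a := by
  classical
  obtain ⟨hfin, hw, hd, hdiff⟩ := h
  have hpa : p ⋖ a := by
    have : p ∈ ({p} : Set P) := rfl
    rw [← ha] at this
    exact this
  set I : Set P := {q | q ≤ p} with hIdef
  have hIfin : I.Finite := hfin p
  have hIls : IsFinLowerSet I := ⟨hIfin, fun q r hqr hr => le_trans hqr hr⟩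
  -- every element strictly below a is ≤ p
  have key : ∀ y : P, y < a → y ≤ p := by
    intro y hy
    have hS : ({z | y ≤ z ∧ z < a}).Finite :=
      (hfin a).subset (fun z hz => hz.2.le)
    obtain ⟨z, hz, hzmax⟩ := hS.exists_maximalFor id _ ⟨y, le_refl y, hy⟩
    have hcov : z ⋖ a := by
      refine ⟨hz.2, fun c hzc hca => ?_⟩
      exact absurd (hzmax (j := c) ⟨hz.1.trans hzc.le, hca⟩ hzc.le) (not_le_of_gt hzc)
    have hzp : z ∈ ({p} : Set P) := by rw [← ha]; exact hcov
    have : z = p := hzp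
    exact this ▸ hz.1
  have hpltA : p < a := hpa.lt
  have haI : a ∉ I := fun hle => absurd hpltA (not_lt_of_ge hle)
  have hdelI : delPts I = {p} := by
    ext x
    constructor
    · rintro ⟨hx, hmax⟩
      rcases lt_or_eq_of_le (hx : x ≤ p) with h1 | h1
      · exact absurd h1 (hmax p (le_refl p))
      · exact h1
    · intro hx
      rw [Set.mem_singleton_iff] at hx
      subst hx
      exact ⟨le_refl x, fun y hy => not_lt_of_ge hy⟩
  set J : Set P := insert a I with hJdef
  have hJfin : J.Finite := hIfin.insert a
  have hJls : IsFinLowerSet J := by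
    refine ⟨hJfin, fun q r hqr hr => ?_⟩
    rcases hr with rfl | hr
    · rcases lt_or_eq_of_le hqr with h1 | h1
      · exact Or.inr (key q h1)
      · exact Or.inl h1
    · exact Or.inr (le_trans hqr hr)
  have hdelJ : delPts J = {a} := by
    ext x
    constructor
    · rintro ⟨hx, hmax⟩
      rcases hx with h1 | hx
      · exact h1
      · exact absurd (lt_of_le_of_lt hx hpltA) (hmax a (Or.inl rfl))
    · intro hx
      rw [Set.mem_singleton_iff] at hx
      subst hx
      refine ⟨Or.inl rfl, fun y hy hlt => ?_⟩
      rcases hy with h1 | hy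
      · subst h1
        exact lt_irrefl _ hlt
      · exact absurd (lt_trans hlt (lt_of_le_of_lt hy hpltA)) (lt_irrefl _)
  obtain ⟨hinsIfin, heqI⟩ := hdiff I hIls
  obtain ⟨hinsJfin, heqJ⟩ := hdiff J hJls
  rw [hdelI, finsum_mem_singleton] at heqI
  rw [hdelJ, finsum_mem_singleton] at heqJ
  have haIns : a ∈ insPts I := ⟨haI, fun y hy => key y hy⟩
  -- convert to Finset sums
  have hIsum : (∑ᶠ x ∈ insPts I, w x) = ∑ x ∈ hinsIfin.toFinset, w x :=
    finsum_mem_eq_finite_toFinset_sum _ _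
  have hJsum : (∑ᶠ x ∈ insPts J, w x) = ∑ x ∈ hinsJfin.toFinset, w x :=
    finsum_mem_eq_finite_toFinset_sum _ _
  have haF : a ∈ hinsIfin.toFinset := hinsIfin.mem_toFinset.2 haIns
  have hsplit : ∑ x ∈ hinsIfin.toFinset, w x
      = w a + ∑ x ∈ hinsIfin.toFinset.erase a, w x :=
    (Finset.add_sum_erase _ w haF).symm
  have hsub : hinsIfin.toFinset.erase a ⊆ hinsJfin.toFinset := by
    intro x hx
    obtain ⟨hxa, hxI⟩ := Finset.mem_erase.1 hx
    have hxI' : x ∈ insPts I := hinsIfin.mem_toFinset.1 hxI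
    refine hinsJfin.mem_toFinset.2 ⟨?_, fun y hy => Or.inr (hxI'.2 y hy)⟩
    rintro (h1 | hxin)
    · exact hxa h1
    · exact hxI'.1 hxin
  have hle : ∑ x ∈ hinsIfin.toFinset.erase a, w x ≤ ∑ x ∈ hinsJfin.toFinset, w x :=
    Finset.sum_le_sum_of_subset_of_nonneg hsub (fun i _ _ => (hw i).le)
  have e1 : w p + d = w a + ∑ x ∈ hinsIfin.toFinset.erase a, w x := by
    rw [← heqI, hIsum, hsplit]
  have e2 : ∑ x ∈ hinsJfin.toFinset, w x = w a + d := by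
    rw [← hJsum, heqJ]
  linarith
end

section
/- Let (P, w, d) be weighted differential, let p ∈ P, and let a and a' be two distinct points each of which covers exactly p. Then the set of points whose set of lower covers is exactly {a, a'} is finite, and the sum of the weights of these points equals w(p). -/
lemma exists_cover_between {P : Type*} [PartialOrder P]
    (hfin : ∀ p : P, {q : P | q ≤ p}.Finite) {q x : P} (h : q < x) :
    ∃ y, q ≤ y ∧ y ⋖ x := by
  have hT : {y : P | q ≤ y ∧ y < x}.Finite :=
    (hfin x).subset (fun y hy => hy.2.le)
  obtain ⟨m, hm, hmax⟩ := hT.exists_maximalFor id _ ⟨q, le_rfl, h⟩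
  refine ⟨m, hm.1, hm.2, fun z hmz hzx => ?_⟩
  exact absurd (hmax ⟨hm.1.trans hmz.le, hzx⟩ hmz.le) hmz.not_ge

lemma mem_insPts_of_covers {P : Type*} [PartialOrder P]
    (hfin : ∀ p : P, {q : P | q ≤ p}.Finite) {I : Set P}
    (hIlow : ∀ ⦃q r : P⦄, q ≤ r → r ∈ I → q ∈ I) {x : P}
    (hx : x ∉ I) (hcov : ∀ z, z ⋖ x → z ∈ I) : x ∈ insPts I :=
  ⟨hx, fun y hy => by
    obtain ⟨z, hyz, hz⟩ := exists_cover_between hfin hy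
    exact hIlow hyz (hcov z hz)⟩

lemma covby_of_max {P : Type*} [PartialOrder P] {I : Set P} {a x : P}
    (hax : a < x) (hlow : ∀ y : P, y < x → y ∈ I)
    (hmax : ∀ y ∈ I, ¬ a < y) : a ⋖ x :=
  ⟨hax, fun z haz hzx => hmax z (hlow z hzx) haz⟩

/-- In a weighted differential poset, if `a` and `a'` are
distinct points each covering exactly `p`, then the set of points whose lower
covers are exactly `{a, a'}` is finite and their total weight equals `w p`. -/
theorem sum_covers_exactly_pair {P : Type*} [PartialOrder P]
    (w : P → ℤ) (d : ℤ) (h : WeightedDifferential w d)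
    (p a a' : P) (hne : a ≠ a')
    (ha : CoversExactly a p) (ha' : CoversExactly a' p) :
    {c : P | {x : P | x ⋖ c} = {a, a'}}.Finite ∧
      (∑ᶠ c ∈ {c : P | {x : P | x ⋖ c} = {a, a'}}, w c) = w p := by
  obtain ⟨hfin, hwpos, hdpos, hdiff⟩ := h
  have hpa : p ⋖ a := (Set.ext_iff.mp ha p).mpr rfl
  have hpa' : p ⋖ a' := (Set.ext_iff.mp ha' p).mpr rfl
  have hcov_a : ∀ {z : P}, z ⋖ a → z = p := fun hz => (Set.ext_iff.mp ha _).mp hz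
  have hcov_a' : ∀ {z : P}, z ⋖ a' → z = p := fun hz => (Set.ext_iff.mp ha' _).mp hz
  have hlt_a : ∀ {q : P}, q < a → q ≤ p := by
    intro q hq
    obtain ⟨z, hqz, hz⟩ := exists_cover_between hfin hq
    exact (hcov_a hz) ▸ hqz
  have hlt_a' : ∀ {q : P}, q < a' → q ≤ p := by
    intro q hq
    obtain ⟨z, hqz, hz⟩ := exists_cover_between hfin hq
    exact (hcov_a' hz) ▸ hqz
  have hap : ¬ a ≤ p := hpa.lt.not_ge
  have hap' : ¬ a' ≤ p := hpa'.lt.not_ge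
  have haa' : ¬ a < a' := fun hh => hap (hlt_a' hh)
  have ha'a : ¬ a' < a := fun hh => hap' (hlt_a hh)
  set I0 : Set P := {q : P | q ≤ p} with hI0def
  have hI0mem : ∀ {y : P}, y ∈ I0 ↔ y ≤ p := Iff.rfl
  have hI0 : IsFinLowerSet I0 := ⟨hfin p, fun q r hqr hr => hqr.trans hr⟩
  set I1 : Set P := insert a I0 with hI1def
  set I1' : Set P := insert a' I0 with hI1'def
  set I2 : Set P := insert a' I1 with hI2def
  have hlow1 : ∀ ⦃q r : P⦄, q ≤ r → r ∈ I1 → q ∈ I1 := by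
    rintro q r hqr (rfl | hr)
    · rcases hqr.lt_or_eq with hlt | rfl
      · exact Or.inr (hlt_a hlt)
      · exact Or.inl rfl
    · exact Or.inr (hqr.trans hr)
  have hlow1' : ∀ ⦃q r : P⦄, q ≤ r → r ∈ I1' → q ∈ I1' := by
    rintro q r hqr (rfl | hr)
    · rcases hqr.lt_or_eq with hlt | rfl
      · exact Or.inr (hlt_a' hlt)
      · exact Or.inl rfl
    · exact Or.inr (hqr.trans hr)
  have hlow2 : ∀ ⦃q r : P⦄, q ≤ r → r ∈ I2 → q ∈ I2 := by
    rintro q r hqr (rfl | hr)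
    · rcases hqr.lt_or_eq with hlt | rfl
      · exact Or.inr (Or.inr (hlt_a' hlt))
      · exact Or.inl rfl
    · exact Or.inr (hlow1 hqr hr)
  have hI1 : IsFinLowerSet I1 := ⟨(hfin p).insert a, hlow1⟩
  have hI1' : IsFinLowerSet I1' := ⟨(hfin p).insert a', hlow1'⟩
  have hI2 : IsFinLowerSet I2 := ⟨((hfin p).insert a).insert a', hlow2⟩
  -- maximality facts
  have hmax1 : ∀ y ∈ I1, ¬ a < y := by
    rintro y (rfl | hy) hlt
    · exact hlt.ne rfl
    · exact hap (hlt.le.trans hy)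
  have hmax2a : ∀ y ∈ I2, ¬ a < y := by
    rintro y (rfl | rfl | hy) hlt
    · exact haa' hlt
    · exact hlt.ne rfl
    · exact hap (hlt.le.trans hy)
  have hmax2a' : ∀ y ∈ I2, ¬ a' < y := by
    rintro y (rfl | rfl | hy) hlt
    · exact hlt.ne rfl
    · exact ha'a hlt
    · exact hap' (hlt.le.trans hy)
  -- delPts computations
  have hdel0 : delPts I0 = {p} := by
    ext x
    constructor
    · rintro ⟨hx, hmax⟩
      exact (hI0mem.mp hx).lt_or_eq.resolve_left (fun hlt => hmax p le_rfl hlt)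
    · rintro rfl
      exact ⟨le_rfl, fun y hy hlt => hlt.not_ge hy⟩
  have hdel1 : delPts I1 = {a} := by
    ext x
    constructor
    · rintro ⟨(rfl | hx), hmax⟩
      · rfl
      · exact absurd (hmax a (Or.inl rfl) (hx.trans_lt hpa.lt)) not_false
    · rintro rfl
      exact ⟨Or.inl rfl, hmax1⟩
  have hdel1' : delPts I1' = {a'} := by
    ext x
    constructor
    · rintro ⟨(rfl | hx), hmax⟩
      · rfl
      · exact absurd (hmax a' (Or.inl rfl) (hx.trans_lt hpa'.lt)) not_false
    · rintro rfl
      refine ⟨Or.inl rfl, ?_⟩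
      rintro y (rfl | hy) hlt
      · exact hlt.ne rfl
      · exact hap' (hlt.le.trans hy)
  have hdel2 : delPts I2 = {a', a} := by
    ext x
    constructor
    · rintro ⟨(rfl | rfl | hx), hmax⟩
      · exact Or.inl rfl
      · exact Or.inr rfl
      · exact absurd (hmax a (Or.inr (Or.inl rfl)) (hx.trans_lt hpa.lt)) not_false
    · rintro (rfl | rfl)
      · exact ⟨Or.inl rfl, hmax2a'⟩
      · exact ⟨Or.inr (Or.inl rfl), hmax2a⟩
  -- the three cover-sets
  set S : Set P := {c : P | {x : P | x ⋖ c} = {a, a'}} with hSdef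
  set A : Set P := {c : P | {x : P | x ⋖ c} = {a}} with hAdef
  set A' : Set P := {c : P | {x : P | x ⋖ c} = {a'}} with hA'def
  have hA_lt : ∀ {x : P}, x ∈ A → a ⋖ x := fun hx => (Set.ext_iff.mp hx a).mpr rfl
  have hA'_lt : ∀ {x : P}, x ∈ A' → a' ⋖ x := fun hx => (Set.ext_iff.mp hx a').mpr rfl
  have hS_lta : ∀ {x : P}, x ∈ S → a ⋖ x := fun hx => (Set.ext_iff.mp hx a).mpr (Or.inl rfl)
  have hS_lta' : ∀ {x : P}, x ∈ S → a' ⋖ x :=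
    fun hx => (Set.ext_iff.mp hx a').mpr (Or.inr rfl)
  -- elements of A (resp. A', S) are not in I0 ∪ {a,a'}
  have hA_not : ∀ {x : P}, a ⋖ x → x ∉ I2 := by
    rintro x hx (rfl | rfl | hmem)
    · exact haa' hx.lt
    · exact hx.lt.ne rfl
    · exact hap (hx.lt.le.trans hmem)
  have hA'_not : ∀ {x : P}, a' ⋖ x → x ∉ I2 := by
    rintro x hx (rfl | rfl | hmem)
    · exact hx.lt.ne rfl
    · exact ha'a hx.lt
    · exact hap' (hx.lt.le.trans hmem)
  -- a, a' are insertion points of I0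
  have haIns0 : a ∈ insPts I0 := ⟨hap, fun y hy => hlt_a hy⟩
  have ha'Ins0 : a' ∈ insPts I0 := ⟨hap', fun y hy => hlt_a' hy⟩
  -- insPts decompositions
  have hins1 : insPts I1 = (insPts I0 \ {a}) ∪ A := by
    ext x
    constructor
    · rintro ⟨hxI, hlow⟩
      by_cases hax : a < x
      · right
        have hacov : a ⋖ x := covby_of_max hax hlow hmax1
        refine Set.eq_singleton_iff_unique_mem.mpr ⟨hacov, fun z hz => ?_⟩
        rcases hlow z hz.lt with rfl | hzI0
        · rfl
        · exact absurd hax (hz.2 ((hI0mem.mp hzI0).trans_lt hpa.lt))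
      · left
        refine ⟨⟨fun hx0 => hxI (Or.inr hx0), fun y hy => ?_⟩,
          fun hxa => hxI (Or.inl hxa)⟩
        rcases hlow y hy with rfl | hyI0
        · exact absurd hy hax
        · exact hyI0
    · rintro (⟨⟨hx0, hlow⟩, hxa⟩ | hxA)
      · refine ⟨?_, fun y hy => Or.inr (hlow y hy)⟩
        rintro (rfl | hmem)
        · exact hxa rfl
        · exact hx0 hmem
      · have hacov := hA_lt hxA
        refine mem_insPts_of_covers hfin hlow1 (fun hmem => hA_not hacov (Or.inr hmem))
          (fun z hz => Or.inl ((Set.ext_iff.mp hxA z).mp hz))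
  have hins1' : insPts I1' = (insPts I0 \ {a'}) ∪ A' := by
    ext x
    constructor
    · rintro ⟨hxI, hlow⟩
      by_cases hax : a' < x
      · right
        have hmax1' : ∀ y ∈ I1', ¬ a' < y := by
          rintro y (rfl | hy) hlt
          · exact hlt.ne rfl
          · exact hap' (hlt.le.trans hy)
        have hacov : a' ⋖ x := covby_of_max hax hlow hmax1'
        refine Set.eq_singleton_iff_unique_mem.mpr ⟨hacov, fun z hz => ?_⟩
        rcases hlow z hz.lt with rfl | hzI0
        · rfl
        · exact absurd hax (hz.2 ((hI0mem.mp hzI0).trans_lt hpa'.lt))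
      · left
        refine ⟨⟨fun hx0 => hxI (Or.inr hx0), fun y hy => ?_⟩,
          fun hxa => hxI (Or.inl hxa)⟩
        rcases hlow y hy with rfl | hyI0
        · exact absurd hy hax
        · exact hyI0
    · rintro (⟨⟨hx0, hlow⟩, hxa⟩ | hxA)
      · refine ⟨?_, fun y hy => Or.inr (hlow y hy)⟩
        rintro (rfl | hmem)
        · exact hxa rfl
        · exact hx0 hmem
      · have hacov := hA'_lt hxA
        refine mem_insPts_of_covers hfin hlow1'
          (fun hmem => hA'_not hacov (by rcases hmem with rfl | hmem
                                         · exact Or.inl rfl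
                                         · exact Or.inr (Or.inr hmem)))
          (fun z hz => Or.inl ((Set.ext_iff.mp hxA z).mp hz))
  have hins2 : insPts I2 = ((insPts I0 \ {a, a'}) ∪ A) ∪ (A' ∪ S) := by
    ext x
    constructor
    · rintro ⟨hxI, hlow⟩
      by_cases hax : a < x <;> by_cases ha'x : a' < x
      · -- both below x : x ∈ S
        right; right
        have hacov : a ⋖ x := covby_of_max hax hlow hmax2a
        have ha'cov : a' ⋖ x := covby_of_max ha'x hlow hmax2a'
        ext z
        constructor
        · intro hz
          rcases hlow z hz.lt with rfl | rfl | hzI0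
          · exact Or.inr rfl
          · exact Or.inl rfl
          · exact absurd hax (hz.2 ((hI0mem.mp hzI0).trans_lt hpa.lt))
        · rintro (rfl | rfl)
          · exact hacov
          · exact ha'cov
      · -- only a : x ∈ A
        left; right
        have hacov : a ⋖ x := covby_of_max hax hlow hmax2a
        refine Set.eq_singleton_iff_unique_mem.mpr ⟨hacov, fun z hz => ?_⟩
        rcases hlow z hz.lt with rfl | rfl | hzI0
        · exact absurd hz.lt ha'x
        · rfl
        · exact absurd hax (hz.2 ((hI0mem.mp hzI0).trans_lt hpa.lt))
      · -- only a' : x ∈ A'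
        right; left
        have hacov : a' ⋖ x := covby_of_max ha'x hlow hmax2a'
        refine Set.eq_singleton_iff_unique_mem.mpr ⟨hacov, fun z hz => ?_⟩
        rcases hlow z hz.lt with rfl | rfl | hzI0
        · rfl
        · exact absurd hz.lt hax
        · exact absurd ha'x (hz.2 ((hI0mem.mp hzI0).trans_lt hpa'.lt))
      · -- neither
        left; left
        refine ⟨⟨fun hx0 => hxI (Or.inr (Or.inr hx0)), fun y hy => ?_⟩, ?_⟩
        · rcases hlow y hy with rfl | rfl | hyI0
          · exact absurd hy ha'x
          · exact absurd hy hax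
          · exact hyI0
        · rintro (rfl | rfl)
          · exact hxI (Or.inr (Or.inl rfl))
          · exact hxI (Or.inl rfl)
    · rintro ((⟨⟨hx0, hlow⟩, hxa⟩ | hxA) | hxA' | hxS)
      · refine ⟨?_, fun y hy => Or.inr (Or.inr (hlow y hy))⟩
        rintro (rfl | rfl | hmem)
        · exact hxa (Or.inr rfl)
        · exact hxa (Or.inl rfl)
        · exact hx0 hmem
      · exact mem_insPts_of_covers hfin hlow2 (hA_not (hA_lt hxA))
          (fun z hz => Or.inr (Or.inl ((Set.ext_iff.mp hxA z).mp hz)))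
      · exact mem_insPts_of_covers hfin hlow2 (hA'_not (hA'_lt hxA'))
          (fun z hz => Or.inl ((Set.ext_iff.mp hxA' z).mp hz))
      · refine mem_insPts_of_covers hfin hlow2 (hA_not (hS_lta hxS)) (fun z hz => ?_)
        rcases (Set.ext_iff.mp hxS z).mp hz with rfl | rfl
        · exact Or.inr (Or.inl rfl)
        · exact Or.inl rfl
  -- finiteness
  obtain ⟨hfin0, heq0⟩ := hdiff I0 hI0
  obtain ⟨hfin1, heq1⟩ := hdiff I1 hI1
  obtain ⟨hfin1', heq1'⟩ := hdiff I1' hI1'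
  obtain ⟨hfin2, heq2⟩ := hdiff I2 hI2
  have hAfin : A.Finite := (hfin1.subset (hins1 ▸ Set.subset_union_right))
  have hA'fin : A'.Finite := (hfin1'.subset (hins1' ▸ Set.subset_union_right))
  have hSfin : S.Finite :=
    hfin2.subset (hins2 ▸ (Set.subset_union_right.trans Set.subset_union_right :
      S ⊆ (insPts I0 \ {a, a'} ∪ A) ∪ (A' ∪ S)))
  -- disjointness
  have hdiffA : Disjoint (insPts I0 \ {a}) A := by
    refine Set.disjoint_left.mpr (fun x hx hxA => ?_)
    exact hap (hI0mem.mp (hx.1.2 a (hA_lt hxA).lt))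
  have hdiffA' : Disjoint (insPts I0 \ {a'}) A' := by
    refine Set.disjoint_left.mpr (fun x hx hxA => ?_)
    exact hap' (hI0mem.mp (hx.1.2 a' (hA'_lt hxA).lt))
  have hdAA' : Disjoint A A' := by
    refine Set.disjoint_left.mpr (fun x hxA hxA' => ?_)
    exact hne ((Set.ext_iff.mp hxA' a).mp (hA_lt hxA))
  have hdAS : Disjoint A S := by
    refine Set.disjoint_left.mpr (fun x hxA hxS => ?_)
    exact hne ((Set.ext_iff.mp hxA a').mp (hS_lta' hxS)).symm
  have hdA'S : Disjoint A' S := by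
    refine Set.disjoint_left.mpr (fun x hxA hxS => ?_)
    exact hne ((Set.ext_iff.mp hxA a).mp (hS_lta hxS))
  have hdiff2A : Disjoint (insPts I0 \ {a, a'}) A := by
    refine Set.disjoint_left.mpr (fun x hx hxA => ?_)
    exact hap (hI0mem.mp (hx.1.2 a (hA_lt hxA).lt))
  have hdiff2A' : Disjoint (insPts I0 \ {a, a'}) A' := by
    refine Set.disjoint_left.mpr (fun x hx hxA => ?_)
    exact hap' (hI0mem.mp (hx.1.2 a' (hA'_lt hxA).lt))
  have hdiff2S : Disjoint (insPts I0 \ {a, a'}) S := by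
    refine Set.disjoint_left.mpr (fun x hx hxS => ?_)
    exact hap (hI0mem.mp (hx.1.2 a (hS_lta hxS).lt))
  -- sums
  have hdisjLR : Disjoint ((insPts I0 \ {a, a'}) ∪ A) (A' ∪ S) :=
    Set.disjoint_union_left.mpr
      ⟨Set.disjoint_union_right.mpr ⟨hdiff2A', hdiff2S⟩,
       Set.disjoint_union_right.mpr ⟨hdAA', hdAS⟩⟩
  rw [hdel0, finsum_mem_singleton] at heq0
  rw [hdel1, finsum_mem_singleton, hins1,
    finsum_mem_union hdiffA (hfin0.diff) hAfin] at heq1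
  rw [hdel1', finsum_mem_singleton, hins1',
    finsum_mem_union hdiffA' (hfin0.diff) hA'fin] at heq1'
  rw [hdel2, finsum_mem_pair hne.symm, hins2,
    finsum_mem_union hdisjLR ((hfin0.diff).union hAfin) (hA'fin.union hSfin),
    finsum_mem_union hdiff2A (hfin0.diff) hAfin,
    finsum_mem_union hdA'S hA'fin hSfin] at heq2
  have hsplit1 : (∑ᶠ x ∈ insPts I0, w x) = (∑ᶠ x ∈ insPts I0 \ {a}, w x) + w a := by
    conv_lhs => rw [← Set.diff_union_of_subset (Set.singleton_subset_iff.mpr haIns0)]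
    rw [finsum_mem_union Set.disjoint_sdiff_left (hfin0.diff) (Set.finite_singleton a),
      finsum_mem_singleton]
  have hsplit1' : (∑ᶠ x ∈ insPts I0, w x) = (∑ᶠ x ∈ insPts I0 \ {a'}, w x) + w a' := by
    conv_lhs => rw [← Set.diff_union_of_subset (Set.singleton_subset_iff.mpr ha'Ins0)]
    rw [finsum_mem_union Set.disjoint_sdiff_left (hfin0.diff) (Set.finite_singleton a'),
      finsum_mem_singleton]
  have hsub2 : ({a, a'} : Set P) ⊆ insPts I0 := by
    rintro x (rfl | rfl)
    · exact haIns0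
    · exact ha'Ins0
  have hsplit2 : (∑ᶠ x ∈ insPts I0, w x)
      = (∑ᶠ x ∈ insPts I0 \ {a, a'}, w x) + (w a + w a') := by
    conv_lhs => rw [← Set.diff_union_of_subset hsub2]
    rw [finsum_mem_union Set.disjoint_sdiff_left (hfin0.diff)
        ((Set.finite_singleton a').insert a), finsum_mem_pair hne]
  exact ⟨hSfin, by linarith only [heq0, heq1, heq1', heq2, hsplit1, hsplit1', hsplit2]⟩
end

section
/- Let P be a partially ordered set in which every principal lower set is finite, let p ∈ P, and let a be a point that covers exactly p. Then the set of insertion points of the principal lower set [a] = {q ∈ P | q ≤ a} is the disjoint union of (i) the insertion points of [p] = {q ∈ P | q ≤ p} other than a, and (ii) the points covering exactly a. -/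
lemma exists_covBy_between' {P : Type*} [PartialOrder P]
    (hfin : ∀ p : P, {q : P | q ≤ p}.Finite) {y a : P} (h : y < a) :
    ∃ c, y ≤ c ∧ c ⋖ a := by
  have hS : ({z : P | y ≤ z ∧ z < a}).Finite :=
    (hfin a).subset (fun z hz => le_of_lt hz.2)
  obtain ⟨m, hm, hmax⟩ := hS.exists_maximalFor id _ ⟨y, le_refl y, h⟩
  have hma : m ⋖ a := ⟨hm.2, fun z hz1 hz2 =>
    absurd (hmax (j := z) ⟨hm.1.trans hz1.le, hz2⟩ hz1.le) hz1.not_ge⟩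
  exact ⟨m, hm.1, hma⟩

/-- If `a` covers exactly `p`, the insertion points of `[a]`
are the disjoint union of the insertion points of `[p]` other than `a` and the
points covering exactly `a`. -/
theorem insPts_principal_of_covers_exactly {P : Type*} [PartialOrder P]
    (hfin : ∀ p : P, {q : P | q ≤ p}.Finite)
    (p a : P) (ha : CoversExactly a p) :
    insPts {q : P | q ≤ a} =
      (insPts {q : P | q ≤ p} \ {a}) ∪ {b : P | CoversExactly b a} ∧
    Disjoint (insPts {q : P | q ≤ p} \ {a}) {b : P | CoversExactly b a} := by
  have hcov : ∀ x : P, x ⋖ a ↔ x = p := fun x => Set.ext_iff.mp ha x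
  have hpa : p ⋖ a := (hcov p).mpr rfl
  have hlep : ∀ y : P, y < a → y ≤ p := by
    intro y hy
    obtain ⟨c, hyc, hca⟩ := exists_covBy_between' hfin hy
    exact ((hcov c).mp hca) ▸ hyc
  constructor
  · ext x
    simp only [insPts, Set.mem_setOf_eq, Set.mem_union, Set.mem_diff,
      Set.mem_singleton_iff]
    constructor
    · rintro ⟨hxa, hlt⟩
      by_cases hax : a < x
      · right
        have hax' : a ⋖ x := ⟨hax, fun z hz1 hz2 => absurd (hlt z hz2) hz1.not_ge⟩
        refine Set.eq_singleton_iff_unique_mem.mpr ⟨hax', fun c hc => ?_⟩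
        have hca : c ≤ a := hlt c hc.1
        rcases eq_or_lt_of_le hca with h | h
        · exact h
        · exact absurd hax (hc.2 h)
      · left
        have hxna : x ≠ a := fun h => hxa (le_of_eq h)
        refine ⟨⟨fun hxp => hxa (hxp.trans hpa.1.le), fun y hy => ?_⟩, hxna⟩
        have hya : y ≤ a := hlt y hy
        rcases eq_or_lt_of_le hya with h | h
        · exact absurd (h ▸ hy) hax
        · exact hlep y h
    · rintro (⟨⟨hxp, hlt⟩, hne⟩ | hcx)
      · refine ⟨fun h => hxp (hlep x (lt_of_le_of_ne h hne)), fun y hy => (hlt y hy).trans hpa.1.le⟩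
      · have hcx' : ∀ c : P, c ⋖ x ↔ c = a := fun c => Set.ext_iff.mp hcx c
        have hax : a ⋖ x := (hcx' a).mpr rfl
        refine ⟨fun h => absurd (lt_of_lt_of_le hax.1 h) (lt_irrefl a), fun y hy => ?_⟩
        obtain ⟨c, hyc, hcxx⟩ := exists_covBy_between' hfin hy
        exact ((hcx' c).mp hcxx) ▸ hyc
  · rw [Set.disjoint_left]
    rintro x ⟨⟨hxp, hlt⟩, hne⟩ hcx
    have hax : a ⋖ x := (Set.ext_iff.mp hcx a).mpr rfl
    exact absurd (lt_of_le_of_lt (hlt a hax.1) hpa.1) (lt_irrefl a)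
end

section
/- Let P be a partially ordered set in which every principal lower set is finite, let p ∈ P, and let a and a' be two distinct points each of which covers exactly p. Let J = {q ∈ P | q ≤ a or q ≤ a'} be the lower set generated by {a, a'}. Then the set of insertion points of J is the pairwise disjoint union of (i) the insertion points of [p] = {q ∈ P | q ≤ p} other than a and a', (ii) the points covering exactly a, (iii) the points covering exactly a', and (iv) the points whose set of lower covers is exactly {a, a'}. -/
open Set in
lemma exists_le_cov {P : Type*} [PartialOrder P]
    (hfin : ∀ p : P, {q : P | q ≤ p}.Finite)
    {q x : P} (h : q < x) : ∃ z, q ≤ z ∧ z ⋖ x := by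
  have hS : {z : P | q ≤ z ∧ z < x}.Finite :=
    (hfin x).subset (fun z hz => hz.2.le)
  obtain ⟨z, hzS, hmax⟩ := hS.exists_maximalFor id _ ⟨q, le_refl q, h⟩
  exact ⟨z, hzS.1, hzS.2, fun w hw1 hw2 =>
    lt_irrefl z (hw1.trans_le (hmax ⟨hzS.1.trans hw1.le, hw2⟩ hw1.le))⟩

lemma covOf {P : Type*} [PartialOrder P] {b c : P}
    (h : {x : P | x ⋖ b} = {c}) : c ⋖ b :=
  (Set.ext_iff.mp h c).mpr rfl

theorem insPts_join_of_two_orphans' {P : Type*} [PartialOrder P]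
    (hfin : ∀ p : P, {q : P | q ≤ p}.Finite)
    (p a a' : P) (hne : a ≠ a')
    (ha : {x : P | x ⋖ a} = {p}) (ha' : {x : P | x ⋖ a'} = {p}) :
    {x : P | x ∉ {q : P | q ≤ a ∨ q ≤ a'} ∧ ∀ y : P, y < x → y ∈ {q : P | q ≤ a ∨ q ≤ a'}} =
      ({x : P | x ∉ {q : P | q ≤ p} ∧ ∀ y : P, y < x → y ∈ {q : P | q ≤ p}} \ {a, a'}) ∪
        {b : P | {x : P | x ⋖ b} = {a}} ∪
        {b : P | {x : P | x ⋖ b} = {a'}} ∪ {c : P | {x : P | x ⋖ c} = {a, a'}} ∧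
    List.Pairwise Disjoint
      [{x : P | x ∉ {q : P | q ≤ p} ∧ ∀ y : P, y < x → y ∈ {q : P | q ≤ p}} \ {a, a'},
        {b : P | {x : P | x ⋖ b} = {a}},
        {b : P | {x : P | x ⋖ b} = {a'}}, {c : P | {x : P | x ⋖ c} = {a, a'}}] := by
  have hpa : p ⋖ a := covOf ha
  have hpa' : p ⋖ a' := covOf ha'
  have hlta : ∀ q : P, q < a → q ≤ p := by
    intro q hq
    obtain ⟨z, hqz, hz⟩ := exists_le_cov hfin hq
    have : z = p := by have : z ∈ {x : P | x ⋖ a} := hz; rwa [ha] at this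
    exact this ▸ hqz
  have hlta' : ∀ q : P, q < a' → q ≤ p := by
    intro q hq
    obtain ⟨z, hqz, hz⟩ := exists_le_cov hfin hq
    have : z = p := by have : z ∈ {x : P | x ⋖ a'} := hz; rwa [ha'] at this
    exact this ▸ hqz
  have hnaa' : ¬ a < a' := fun h => absurd (hlta' a h) (hpa.lt.not_ge)
  have hna'a : ¬ a' < a := fun h => absurd (hlta a' h) (hpa'.lt.not_ge)
  constructor
  · ext x
    simp only [Set.mem_setOf_eq, Set.mem_union, Set.mem_diff, Set.mem_insert_iff,
      Set.mem_singleton_iff]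
    constructor
    · rintro ⟨hxJ, hbelow⟩
      have hxa : ¬ x ≤ a := fun h => hxJ (Or.inl h)
      have hxa' : ¬ x ≤ a' := fun h => hxJ (Or.inr h)
      have hxp : ¬ x ≤ p := fun h => hxa (h.trans hpa.lt.le)
      by_cases hax : a < x <;> by_cases ha'x : a' < x
      · -- both: covers = {a, a'}
        right
        have cova : a ⋖ x := by
          refine ⟨hax, fun w hw1 hw2 => ?_⟩
          rcases hbelow w hw2 with h | h
          · exact absurd (hw1.trans_le h) (lt_irrefl a)
          · rcases eq_or_lt_of_le h with rfl | h
            · exact hnaa' hw1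
            · exact absurd (hlta' w h) ((hpa.lt.trans hw1).not_ge)
        have cova' : a' ⋖ x := by
          refine ⟨ha'x, fun w hw1 hw2 => ?_⟩
          rcases hbelow w hw2 with h | h
          · rcases eq_or_lt_of_le h with rfl | h
            · exact hna'a hw1
            · exact absurd (hlta w h) ((hpa'.lt.trans hw1).not_ge)
          · exact absurd (hw1.trans_le h) (lt_irrefl a')
        ext z
        simp only [Set.mem_setOf_eq, Set.mem_insert_iff, Set.mem_singleton_iff]
        constructor
        · intro hz
          rcases hbelow z hz.lt with h | h
          · rcases eq_or_lt_of_le h with rfl | h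
            · exact Or.inl rfl
            · exact absurd hax (hz.2 ((hlta z h).trans_lt hpa.lt))
          · rcases eq_or_lt_of_le h with rfl | h
            · exact Or.inr rfl
            · exact absurd ha'x (hz.2 ((hlta' z h).trans_lt hpa'.lt))
        · rintro (rfl | rfl)
          · exact cova
          · exact cova'
      · -- only a < x : covers exactly a
        left; left; right
        have cova : a ⋖ x := by
          refine ⟨hax, fun w hw1 hw2 => ?_⟩
          rcases hbelow w hw2 with h | h
          · exact absurd (hw1.trans_le h) (lt_irrefl a)
          · rcases eq_or_lt_of_le h with rfl | h
            · exact ha'x hw2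
            · exact absurd (hlta' w h) ((hpa.lt.trans hw1).not_ge)
        ext z
        simp only [Set.mem_setOf_eq, Set.mem_singleton_iff]
        constructor
        · intro hz
          rcases hbelow z hz.lt with h | h
          · rcases eq_or_lt_of_le h with rfl | h
            · rfl
            · exact absurd hax (hz.2 ((hlta z h).trans_lt hpa.lt))
          · rcases eq_or_lt_of_le h with rfl | h
            · exact absurd hz.lt ha'x
            · exact absurd hax (hz.2 ((hlta' z h).trans_lt hpa.lt))
        · rintro rfl; exact cova
      · -- only a' < x : covers exactly a'
        left; right
        have cova' : a' ⋖ x := by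
          refine ⟨ha'x, fun w hw1 hw2 => ?_⟩
          rcases hbelow w hw2 with h | h
          · rcases eq_or_lt_of_le h with rfl | h
            · exact hax hw2
            · exact absurd (hlta w h) ((hpa'.lt.trans hw1).not_ge)
          · exact absurd (hw1.trans_le h) (lt_irrefl a')
        ext z
        simp only [Set.mem_setOf_eq, Set.mem_singleton_iff]
        constructor
        · intro hz
          rcases hbelow z hz.lt with h | h
          · rcases eq_or_lt_of_le h with rfl | h
            · exact absurd hz.lt hax
            · exact absurd ha'x (hz.2 ((hlta z h).trans_lt hpa'.lt))
          · rcases eq_or_lt_of_le h with rfl | h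
            · rfl
            · exact absurd ha'x (hz.2 ((hlta' z h).trans_lt hpa'.lt))
        · rintro rfl; exact cova'
      · -- neither : insPts of ↓p
        left; left; left
        refine ⟨⟨hxp, fun y hy => ?_⟩, ?_⟩
        · rcases hbelow y hy with h | h
          · rcases eq_or_lt_of_le h with rfl | h
            · exact absurd hy hax
            · exact hlta y h
          · rcases eq_or_lt_of_le h with rfl | h
            · exact absurd hy ha'x
            · exact hlta' y h
        · rintro (rfl | rfl)
          · exact hxa le_rfl
          · exact hxa' le_rfl
    · rintro (((⟨⟨hxp, hbel⟩, hxne⟩ | hcov) | hcov) | hcov)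
      · -- from insPts ↓p
        refine ⟨?_, fun y hy => Or.inl ((hbel y hy).trans hpa.lt.le)⟩
        rintro (h | h)
        · rcases eq_or_lt_of_le h with rfl | h
          · exact hxne (Or.inl rfl)
          · exact hxp (hlta x h)
        · rcases eq_or_lt_of_le h with rfl | h
          · exact hxne (Or.inr rfl)
          · exact hxp (hlta' x h)
      · -- covers exactly a
        have hax : a < x := (covOf hcov).lt
        refine ⟨?_, fun y hy => ?_⟩
        · rintro (h | h)
          · exact absurd (hax.trans_le h) (lt_irrefl a)
          · exact hnaa' (hax.trans_le h)
        · obtain ⟨z, hyz, hz⟩ := exists_le_cov hfin hy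
          have : z = a := by have : z ∈ {w : P | w ⋖ x} := hz; rwa [hcov] at this
          exact Or.inl (this ▸ hyz)
      · -- covers exactly a'
        have hax : a' < x := (covOf hcov).lt
        refine ⟨?_, fun y hy => ?_⟩
        · rintro (h | h)
          · exact hna'a (hax.trans_le h)
          · exact absurd (hax.trans_le h) (lt_irrefl a')
        · obtain ⟨z, hyz, hz⟩ := exists_le_cov hfin hy
          have : z = a' := by have : z ∈ {w : P | w ⋖ x} := hz; rwa [hcov] at this
          exact Or.inr (this ▸ hyz)
      · -- covers = {a, a'}
        have haC : a ⋖ x := (Set.ext_iff.mp hcov a).mpr (Or.inl rfl)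
        have ha'C : a' ⋖ x := (Set.ext_iff.mp hcov a').mpr (Or.inr rfl)
        refine ⟨?_, fun y hy => ?_⟩
        · rintro (h | h)
          · exact absurd (haC.lt.trans_le h) (lt_irrefl a)
          · exact absurd (ha'C.lt.trans_le h) (lt_irrefl a')
        · obtain ⟨z, hyz, hz⟩ := exists_le_cov hfin hy
          have : z ∈ ({a, a'} : Set P) := by
            have : z ∈ {w : P | w ⋖ x} := hz; rwa [hcov] at this
          rcases this with rfl | rfl
          · exact Or.inl hyz
          · exact Or.inr hyz
  · -- pairwise disjointness
    have d12 : Disjoint ({x : P | x ∉ {q : P | q ≤ p} ∧ ∀ y : P, y < x → y ∈ {q : P | q ≤ p}} \ {a, a'})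
        {b : P | {x : P | x ⋖ b} = {a}} := by
      rw [Set.disjoint_left]
      rintro x ⟨⟨_, hbel⟩, _⟩ h2
      exact absurd (hbel a (covOf h2).lt) (hpa.lt.not_ge)
    have d13 : Disjoint ({x : P | x ∉ {q : P | q ≤ p} ∧ ∀ y : P, y < x → y ∈ {q : P | q ≤ p}} \ {a, a'})
        {b : P | {x : P | x ⋖ b} = {a'}} := by
      rw [Set.disjoint_left]
      rintro x ⟨⟨_, hbel⟩, _⟩ h2
      exact absurd (hbel a' (covOf h2).lt) (hpa'.lt.not_ge)
    have d14 : Disjoint ({x : P | x ∉ {q : P | q ≤ p} ∧ ∀ y : P, y < x → y ∈ {q : P | q ≤ p}} \ {a, a'})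
        {c : P | {x : P | x ⋖ c} = {a, a'}} := by
      rw [Set.disjoint_left]
      rintro x ⟨⟨_, hbel⟩, _⟩ h2
      have : a ⋖ x := (Set.ext_iff.mp h2 a).mpr (Or.inl rfl)
      exact absurd (hbel a this.lt) (hpa.lt.not_ge)
    have d23 : Disjoint {b : P | {x : P | x ⋖ b} = {a}} {b : P | {x : P | x ⋖ b} = {a'}} := by
      rw [Set.disjoint_left]
      intro x h1 h2
      exact hne (Set.singleton_eq_singleton_iff.mp (h1 ▸ h2 : ({a} : Set P) = {a'}))
    have d24 : Disjoint {b : P | {x : P | x ⋖ b} = {a}} {c : P | {x : P | x ⋖ c} = {a, a'}} := by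
      rw [Set.disjoint_left]
      intro x h1 h2
      have : a' ∈ ({a} : Set P) := by
        rw [← h1, h2]; exact Or.inr rfl
      exact hne this.symm
    have d34 : Disjoint {b : P | {x : P | x ⋖ b} = {a'}} {c : P | {x : P | x ⋖ c} = {a, a'}} := by
      rw [Set.disjoint_left]
      intro x h1 h2
      have : a ∈ ({a'} : Set P) := by
        rw [← h1, h2]; exact Or.inl rfl
      exact hne this
    refine List.Pairwise.cons ?_ (List.Pairwise.cons ?_ (List.Pairwise.cons ?_ (List.pairwise_singleton _ _)))
    · intro s hs
      rcases List.mem_cons.mp hs with rfl | hs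
      · exact d12
      rcases List.mem_cons.mp hs with rfl | hs
      · exact d13
      rcases List.mem_cons.mp hs with rfl | hs
      · exact d14
      exact absurd hs List.not_mem_nil
    · intro s hs
      rcases List.mem_cons.mp hs with rfl | hs
      · exact d23
      rcases List.mem_cons.mp hs with rfl | hs
      · exact d24
      exact absurd hs List.not_mem_nil
    · intro s hs
      rcases List.mem_cons.mp hs with rfl | hs
      · exact d34
      exact absurd hs List.not_mem_nil


/-- If `a ≠ a'` each cover exactly `p` and
`J = {q | q ≤ a ∨ q ≤ a'}`, the insertion points of `J` are the pairwise
disjoint union of (i) the insertion points of `[p]` other than `a` and `a'`,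
(ii) the points covering exactly `a`, (iii) the points covering exactly `a'`,
and (iv) the points whose set of lower covers is exactly `{a, a'}`. -/
theorem insPts_join_of_two_orphans {P : Type*} [PartialOrder P]
    (hfin : ∀ p : P, {q : P | q ≤ p}.Finite)
    (p a a' : P) (hne : a ≠ a')
    (ha : CoversExactly a p) (ha' : CoversExactly a' p) :
    insPts {q : P | q ≤ a ∨ q ≤ a'} =
      (insPts {q : P | q ≤ p} \ {a, a'}) ∪ {b : P | CoversExactly b a} ∪
        {b : P | CoversExactly b a'} ∪ {c : P | {x : P | x ⋖ c} = {a, a'}} ∧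
    List.Pairwise Disjoint
      [insPts {q : P | q ≤ p} \ {a, a'}, {b : P | CoversExactly b a},
        {b : P | CoversExactly b a'}, {c : P | {x : P | x ⋖ c} = {a, a'}}] := by
  exact insPts_join_of_two_orphans' hfin p a a' hne ha ha'
end

section
/- Let d be a positive integer and consider the poset L of d-tuples of Young diagrams, i.e. functions from Fin d to Young diagrams ordered componentwise by containment. Then for every element f of L, the set of elements covering f and the set of elements covered by f are both finite, and the number of elements covering f equals the number of elements covered by f plus d. In other words, L = 𝕐^{×d}, the d-fold cartesian power of Young's lattice, is a d-differential distributive lattice. -/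
open Function

namespace YoungAux

/-- Rows where a cell can be added. -/
def A (μ : YoungDiagram) : Set ℕ := {i | i = 0 ∨ μ.rowLen i < μ.rowLen (i - 1)}

/-- Rows where a cell can be removed. -/
def R (μ : YoungDiagram) : Set ℕ := {i | μ.rowLen (i + 1) < μ.rowLen i}

lemma A_finite (μ : YoungDiagram) : (A μ).Finite := by
  apply (Set.finite_Iic (μ.colLen 0)).subset
  rintro i (rfl | h)
  · simp
  · have h0 : (i - 1, 0) ∈ μ :=
      YoungDiagram.mem_iff_lt_rowLen.2 ((Nat.zero_le _).trans_lt h)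
    have := YoungDiagram.mem_iff_lt_colLen.1 h0
    exact Set.mem_Iic.2 (by omega)

lemma R_finite (μ : YoungDiagram) : (R μ).Finite := by
  apply (Set.finite_Iic (μ.colLen 0)).subset
  intro i h
  have h0 : (i, 0) ∈ μ :=
    YoungDiagram.mem_iff_lt_rowLen.2 ((Nat.zero_le _).trans_lt h)
  have := YoungDiagram.mem_iff_lt_colLen.1 h0
  exact Set.mem_Iic.2 (by omega)

lemma A_eq (μ : YoungDiagram) : A μ = insert 0 ((· + 1) '' R μ) := by
  ext i
  constructor
  · rintro (rfl | h)
    · exact Set.mem_insert _ _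
    · rcases Nat.eq_zero_or_pos i with rfl | hi
      · exact Set.mem_insert _ _
      · refine Set.mem_insert_iff.2 (Or.inr ⟨i - 1, ?_, by show i - 1 + 1 = i; omega⟩)
        have : i - 1 + 1 = i := by omega
        simpa [R, this] using h
  · rintro (rfl | ⟨j, hj, rfl⟩)
    · exact Or.inl rfl
    · right
      have hE : j + 1 - 1 = j := rfl
      rw [hE]
      exact hj

lemma ncard_A (μ : YoungDiagram) : (A μ).ncard = (R μ).ncard + 1 := by
  rw [A_eq]
  rw [Set.ncard_insert_of_notMem (by simp) (((R_finite μ).image _))]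
  rw [Set.ncard_image_of_injective _ (add_left_injective 1)]

/-- The rectangle diagram below-left of a cell. -/
def rect (c : ℕ × ℕ) : YoungDiagram :=
  ⟨Finset.Iic c, by rw [Finset.coe_Iic]; exact isLowerSet_Iic c⟩

/-- Diagram obtained by adding the addable cell in row `i`. -/
def addD (μ : YoungDiagram) (i : ℕ) : YoungDiagram := μ ⊔ rect (i, μ.rowLen i)

/-- Diagram obtained by removing the removable cell in row `i`. -/
def delD (μ : YoungDiagram) (i : ℕ) : YoungDiagram :=
  ⟨μ.cells.filter (fun c => ¬ ((i, μ.rowLen i - 1) ≤ c)), by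
    intro x y hxy hy
    simp only [Finset.coe_filter, Set.mem_setOf_eq, Finset.mem_coe] at hy ⊢
    exact ⟨μ.isLowerSet hxy hy.1, fun hc => hy.2 (hc.trans hxy)⟩⟩

lemma mem_of_le_corner {μ : YoungDiagram} {i : ℕ} (hi : i ∈ A μ) {c : ℕ × ℕ}
    (hle : c ≤ (i, μ.rowLen i)) (hne : c ≠ (i, μ.rowLen i)) : c ∈ μ := by
  obtain ⟨a, b⟩ := c
  obtain ⟨ha, hb⟩ := Prod.mk_le_mk.1 hle
  rcases eq_or_lt_of_le ha with rfl | ha'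
  · have : b < μ.rowLen a := lt_of_le_of_ne hb (fun h => hne (by rw [h]))
    exact YoungDiagram.mem_iff_lt_rowLen.2 this
  · rcases hi with rfl | hdesc
    · omega
    · have : μ.rowLen (i - 1) ≤ μ.rowLen a := μ.rowLen_anti a (i - 1) (by omega)
      exact YoungDiagram.mem_iff_lt_rowLen.2 (by omega)

lemma addD_cells {μ : YoungDiagram} {i : ℕ} (hi : i ∈ A μ) :
    (addD μ i).cells = insert (i, μ.rowLen i) μ.cells := by
  ext c
  simp only [addD, YoungDiagram.cells_sup, Finset.mem_union, rect, Finset.mem_Iic,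
    Finset.mem_insert]
  constructor
  · rintro (h | h)
    · exact Or.inr h
    · rcases eq_or_ne c (i, μ.rowLen i) with rfl | hne
      · exact Or.inl rfl
      · exact Or.inr (mem_of_le_corner hi h hne)
  · rintro (rfl | h)
    · exact Or.inr le_rfl
    · exact Or.inl h

lemma corner_not_mem (μ : YoungDiagram) (i : ℕ) : (i, μ.rowLen i) ∉ μ := by
  simp [YoungDiagram.mem_iff_lt_rowLen]

lemma corner_mem {μ : YoungDiagram} {i : ℕ} (hi : i ∈ R μ) : (i, μ.rowLen i - 1) ∈ μ := by
  have : 0 < μ.rowLen i := (Nat.zero_le _).trans_lt hi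
  exact YoungDiagram.mem_iff_lt_rowLen.2 (by omega)

lemma eq_corner_of_le {μ : YoungDiagram} {i : ℕ} (hi : i ∈ R μ) {c : ℕ × ℕ}
    (hle : (i, μ.rowLen i - 1) ≤ c) (hc : c ∈ μ) : c = (i, μ.rowLen i - 1) := by
  obtain ⟨a, b⟩ := c
  obtain ⟨ha, hb⟩ := Prod.mk_le_mk.1 hle
  have hmem := YoungDiagram.mem_iff_lt_rowLen.1 hc
  have hi' : μ.rowLen (i + 1) < μ.rowLen i := hi
  rcases eq_or_lt_of_le ha with heq | ha'
  · subst heq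
    simp only [Prod.mk.injEq]
    exact ⟨trivial, by omega⟩
  · exfalso
    have h3 : μ.rowLen a ≤ μ.rowLen (i + 1) := μ.rowLen_anti (i + 1) a (by omega)
    omega

lemma delD_cells {μ : YoungDiagram} {i : ℕ} (hi : i ∈ R μ) :
    (delD μ i).cells = μ.cells.erase (i, μ.rowLen i - 1) := by
  ext c
  simp only [delD, Finset.mem_filter, Finset.mem_erase]
  constructor
  · rintro ⟨hc, hle⟩
    exact ⟨fun h => hle (h ▸ le_rfl), hc⟩
  · rintro ⟨hne, hc⟩
    exact ⟨hc, fun hle => hne (eq_corner_of_le hi hle hc)⟩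

lemma covBy_iff {μ ν : YoungDiagram} :
    μ ⋖ ν ↔ ∃ c, c ∉ μ.cells ∧ ν.cells = insert c μ.cells := by
  constructor
  · intro h
    have hlt : μ < ν := h.lt
    have hss : μ.cells ⊂ ν.cells := hlt
    have hne : (↑(ν.cells \ μ.cells) : Set (ℕ × ℕ)).Nonempty := by
      rw [Finset.coe_nonempty, Finset.sdiff_nonempty]
      exact fun hsub => hss.2 hsub
    obtain ⟨c, hc, hmin⟩ : ∃ c ∈ (↑(ν.cells \ μ.cells) : Set (ℕ × ℕ)),
        ∀ x ∈ (↑(ν.cells \ μ.cells) : Set (ℕ × ℕ)), x ≤ c → c = x := by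
      obtain ⟨c, hc⟩ := (↑(ν.cells \ μ.cells) : Set (ℕ × ℕ)).toFinite.exists_minimal hne
      exact ⟨c, hc.1, fun x hx hxc => le_antisymm (hc.2 hx hxc) hxc⟩
    simp only [Finset.mem_coe, Finset.mem_sdiff] at hc
    -- μ' = μ ⊔ rect c
    set μ' : YoungDiagram := μ ⊔ rect c with hμ'
    have hcells : μ'.cells = insert c μ.cells := by
      ext x
      simp only [hμ', YoungDiagram.cells_sup, Finset.mem_union, rect, Finset.mem_Iic,
        Finset.mem_insert]
      constructor
      · rintro (h | hxc)
        · exact Or.inr h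
        · rcases eq_or_ne x c with rfl | hne
          · exact Or.inl rfl
          · right
            have hxν : x ∈ ν := ν.isLowerSet hxc hc.1
            by_contra hxμ
            have hx' : x ∈ (↑(ν.cells \ μ.cells) : Set (ℕ × ℕ)) := by
              simp [hxν, hxμ]
            exact hne (hmin x hx' hxc).symm
      · rintro (rfl | h)
        · exact Or.inr le_rfl
        · exact Or.inl h
    have h1 : μ < μ' := by
      rw [← YoungDiagram.cells_ssubset_iff, hcells]
      exact Finset.ssubset_insert hc.2
    have h2 : μ' ≤ ν := by
      rw [← YoungDiagram.cells_subset_iff, hcells]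
      intro x hx
      rcases Finset.mem_insert.1 hx with rfl | hx
      · exact hc.1
      · exact hlt.le hx
    have : μ' = ν := by
      by_contra hne
      exact h.2 h1 (lt_of_le_of_ne h2 hne)
    exact ⟨c, hc.2, by rw [← this, hcells]⟩
  · rintro ⟨c, hc, hcells⟩
    have hlt : μ < ν := by
      rw [← YoungDiagram.cells_ssubset_iff, hcells]
      exact Finset.ssubset_insert hc
    refine ⟨hlt, fun z h1 h2 => ?_⟩
    have hc1 : μ.cells.card < z.cells.card := Finset.card_lt_card h1
    have hc2 : z.cells.card < ν.cells.card := Finset.card_lt_card h2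
    rw [hcells, Finset.card_insert_of_notMem hc] at hc2
    omega

lemma covBy_addD {μ : YoungDiagram} {i : ℕ} (hi : i ∈ A μ) : μ ⋖ addD μ i :=
  covBy_iff.2 ⟨(i, μ.rowLen i), by simpa using corner_not_mem μ i, addD_cells hi⟩

lemma covers_eq (μ : YoungDiagram) : {ν | μ ⋖ ν} = addD μ '' A μ := by
  ext ν
  simp only [Set.mem_setOf_eq, Set.mem_image]
  constructor
  · intro h
    obtain ⟨c, hc, hcells⟩ := covBy_iff.1 h
    obtain ⟨i, j⟩ := c
    have hmemν : ∀ x, x ∈ ν.cells ↔ x = (i, j) ∨ x ∈ μ.cells := by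
      intro x; rw [hcells]; simp
    have hrl : μ.rowLen i ≤ j := by
      by_contra hlt
      exact hc (YoungDiagram.mem_iff_lt_rowLen.2 (by omega))
    have hj : j = μ.rowLen i := by
      rcases Nat.eq_zero_or_pos j with rfl | hj0
      · omega
      · have : (i, j - 1) ∈ ν :=
          ν.up_left_mem le_rfl (by omega) ((hmemν (i, j)).2 (Or.inl rfl))
        rcases (hmemν _).1 this with heq | hmem
        · have := congrArg Prod.snd heq; simp at this; omega
        · have := YoungDiagram.mem_iff_lt_rowLen.1 hmem
          omega
    have hiA : i ∈ A μ := by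
      rcases Nat.eq_zero_or_pos i with rfl | hi0
      · exact Or.inl rfl
      · right
        have : (i - 1, j) ∈ ν :=
          ν.up_left_mem (by omega) le_rfl ((hmemν (i, j)).2 (Or.inl rfl))
        rcases (hmemν _).1 this with heq | hmem
        · have := congrArg Prod.fst heq; simp at this; omega
        · have := YoungDiagram.mem_iff_lt_rowLen.1 hmem
          omega
    refine ⟨i, hiA, ?_⟩
    apply YoungDiagram.ext
    rw [addD_cells hiA, hcells, hj]
  · rintro ⟨i, hi, rfl⟩
    exact covBy_addD hi

lemma lowerCovers_eq (μ : YoungDiagram) : {ν | ν ⋖ μ} = delD μ '' R μ := by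
  ext ν
  simp only [Set.mem_setOf_eq, Set.mem_image]
  constructor
  · intro h
    obtain ⟨c, hc, hcells⟩ := covBy_iff.1 h
    obtain ⟨i, j⟩ := c
    have hcμ : (i, j) ∈ μ.cells := by rw [hcells]; exact Finset.mem_insert_self _ _
    have hνerase : ν.cells = μ.cells.erase (i, j) := by
      rw [hcells, Finset.erase_insert hc]
    have hjlt : j < μ.rowLen i := YoungDiagram.mem_iff_lt_rowLen.1 hcμ
    have hnext : (i, j + 1) ∉ μ.cells := by
      intro hmem
      have hν : (i, j + 1) ∈ ν.cells := by
        rw [hνerase, Finset.mem_erase]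
        exact ⟨by simp, hmem⟩
      have : (i, j) ∈ ν.cells := ν.up_left_mem le_rfl (by omega) hν
      rw [hνerase, Finset.mem_erase] at this
      exact this.1 rfl
    have hdown : (i + 1, j) ∉ μ.cells := by
      intro hmem
      have hν : (i + 1, j) ∈ ν.cells := by
        rw [hνerase, Finset.mem_erase]
        exact ⟨by simp, hmem⟩
      have : (i, j) ∈ ν.cells := ν.up_left_mem (by omega) le_rfl hν
      rw [hνerase, Finset.mem_erase] at this
      exact this.1 rfl
    have h1 : μ.rowLen i = j + 1 := by
      have : ¬ (j + 1 < μ.rowLen i) := fun hh => hnext (YoungDiagram.mem_iff_lt_rowLen.2 hh)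
      omega
    have h2 : μ.rowLen (i + 1) ≤ j := by
      have : ¬ (j < μ.rowLen (i + 1)) := fun hh => hdown (YoungDiagram.mem_iff_lt_rowLen.2 hh)
      omega
    have hiR : i ∈ R μ := by simp only [R, Set.mem_setOf_eq]; omega
    refine ⟨i, hiR, ?_⟩
    apply YoungDiagram.ext
    have hjj : μ.rowLen i - 1 = j := by omega
    rw [delD_cells hiR, hνerase, hjj]
  · rintro ⟨i, hi, rfl⟩
    apply covBy_iff.2
    refine ⟨(i, μ.rowLen i - 1), ?_, ?_⟩
    · rw [delD_cells hi]; simp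
    · rw [delD_cells hi, Finset.insert_erase (corner_mem hi)]

lemma addD_injOn (μ : YoungDiagram) : Set.InjOn (addD μ) (A μ) := by
  intro i hi j hj hij
  have h1 : (i, μ.rowLen i) ∈ (addD μ j).cells := by
    rw [← hij, addD_cells hi]; exact Finset.mem_insert_self _ _
  rw [addD_cells hj, Finset.mem_insert] at h1
  rcases h1 with heq | hmem
  · exact congrArg Prod.fst heq
  · exact absurd hmem (corner_not_mem μ i)

lemma delD_injOn (μ : YoungDiagram) : Set.InjOn (delD μ) (R μ) := by
  intro i hi j hj hij
  have h1 : (j, μ.rowLen j - 1) ∉ (delD μ i).cells := by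
    rw [hij, delD_cells hj]; simp
  rw [delD_cells hi, Finset.mem_erase] at h1
  push_neg at h1
  by_contra hne
  have hne' : (j, μ.rowLen j - 1) ≠ (i, μ.rowLen i - 1) :=
    fun h => hne (congrArg Prod.fst h).symm
  exact (h1 hne') (corner_mem hj)

lemma covers_finite (μ : YoungDiagram) : {ν | μ ⋖ ν}.Finite := by
  rw [covers_eq]; exact (A_finite μ).image _

lemma lowerCovers_finite (μ : YoungDiagram) : {ν | ν ⋖ μ}.Finite := by
  rw [lowerCovers_eq]; exact (R_finite μ).image _

lemma ncard_covers (μ : YoungDiagram) :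
    {ν | μ ⋖ ν}.ncard = {ν | ν ⋖ μ}.ncard + 1 := by
  rw [covers_eq, lowerCovers_eq, Set.ncard_image_of_injOn (addD_injOn μ),
    Set.ncard_image_of_injOn (delD_injOn μ), ncard_A]

lemma pi_covBy_iff {ι : Type*} [DecidableEq ι] {α : ι → Type*} [∀ i, PartialOrder (α i)]
    {f g : ∀ i, α i} : f ⋖ g ↔ ∃ i, f i ⋖ g i ∧ ∀ j, j ≠ i → f j = g j := by
  constructor
  · intro h
    obtain ⟨hle, i, hi⟩ := Pi.lt_def.1 h.lt
    refine ⟨i, ⟨hi, fun z h1 h2 => ?_⟩, fun j hj => ?_⟩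
    · have hlt1 : f < update f i z := by
        refine Pi.lt_def.2 ⟨fun k => ?_, i, by simp [h1]⟩
        rcases eq_or_ne k i with rfl | hk
        · simp [h1.le]
        · simp [hk]
      have hlt2 : update f i z < g := by
        refine Pi.lt_def.2 ⟨fun k => ?_, i, by simp [h2]⟩
        rcases eq_or_ne k i with rfl | hk
        · simp [h2.le]
        · simp [hk, hle k]
      exact h.2 hlt1 hlt2
    · by_contra hne
      have hjlt : f j < g j := lt_of_le_of_ne (hle j) hne
      have hlt1 : f < update f i (g i) := Pi.lt_def.2 ⟨fun k => by
          rcases eq_or_ne k i with rfl | hk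
          · simp [hi.le]
          · simp [hk], i, by simp [hi]⟩
      have hlt2 : update f i (g i) < g := by
        refine Pi.lt_def.2 ⟨fun k => ?_, j, by simp [hj, hjlt]⟩
        rcases eq_or_ne k i with rfl | hk
        · simp
        · simp [hk, hle k]
      exact h.2 hlt1 hlt2
  · rintro ⟨i, hci, heq⟩
    have hlt : f < g := Pi.lt_def.2 ⟨fun j => by
        rcases eq_or_ne j i with rfl | hj
        · exact hci.lt.le
        · exact (heq j hj).le, i, hci.lt⟩
    refine ⟨hlt, fun z h1 h2 => ?_⟩
    have hz : ∀ j, j ≠ i → z j = f j := fun j hj =>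
      le_antisymm (by rw [heq j hj]; exact h2.le j) (h1.le j)
    have hzi1 : f i ≤ z i := h1.le i
    have hzi2 : z i ≤ g i := h2.le i
    rcases eq_or_lt_of_le hzi1 with heq1 | hlt1
    · exact absurd (funext fun j => by
        rcases eq_or_ne j i with rfl | hj
        · exact heq1.symm
        · exact hz j hj) h1.ne'
    rcases eq_or_lt_of_le hzi2 with heq2 | hlt2
    · exact absurd (funext fun j => by
        rcases eq_or_ne j i with rfl | hj
        · exact heq2
        · exact (hz j hj).trans (heq j hj)) h2.ne
    exact hci.2 hlt1 hlt2

lemma disjoint_update_images {ι : Type*} [DecidableEq ι] {α : ι → Type*} (f : ∀ i, α i)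
    (T : ∀ i, Set (α i)) (hT : ∀ i ν, ν ∈ T i → ν ≠ f i) {i j : ι} (hij : i ≠ j) :
    Disjoint (update f i '' T i) (update f j '' T j) := by
  rw [Set.disjoint_left]
  rintro x ⟨ν, hν, rfl⟩ ⟨ν', hν', hx⟩
  have h1 : update f j ν' i = f i := update_of_ne hij _ _
  rw [hx] at h1
  simp only [update_self] at h1
  exact hT i ν hν h1

lemma ncard_biUnion {ι α : Type*} [DecidableEq ι] (s : Finset ι) (S : ι → Set α)
    (hfin : ∀ i ∈ s, (S i).Finite)
    (hdisj : ∀ i ∈ s, ∀ j ∈ s, i ≠ j → Disjoint (S i) (S j)) :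
    (⋃ i ∈ s, S i).ncard = ∑ i ∈ s, (S i).ncard := by
  induction s using Finset.induction_on with
  | empty => simp
  | insert _ _ ha ih =>
    rename_i a s
    rw [Finset.set_biUnion_insert, Finset.sum_insert ha]
    have hfins : (⋃ i ∈ s, S i).Finite :=
      Set.Finite.biUnion s.finite_toSet (fun i hi => hfin i (Finset.mem_insert_of_mem hi))
    rw [Set.ncard_union_eq ?_ (hfin a (Finset.mem_insert_self a s)) hfins]
    · rw [ih (fun i hi => hfin i (Finset.mem_insert_of_mem hi))
        (fun i hi j hj hij => hdisj i (Finset.mem_insert_of_mem hi) j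
          (Finset.mem_insert_of_mem hj) hij)]
    · rw [Set.disjoint_iUnion_right]
      intro i
      rw [Set.disjoint_iUnion_right]
      intro hi
      exact hdisj a (Finset.mem_insert_self a s) i (Finset.mem_insert_of_mem hi)
        (fun h => ha (h ▸ hi))

lemma pi_covers_eq {d : ℕ} (f : Fin d → YoungDiagram) :
    {g : Fin d → YoungDiagram | f ⋖ g} = ⋃ i, update f i '' {ν | f i ⋖ ν} := by
  ext g
  simp only [Set.mem_setOf_eq, Set.mem_iUnion, Set.mem_image]
  constructor
  · intro h
    obtain ⟨i, hci, heq⟩ := pi_covBy_iff.1 h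
    refine ⟨i, g i, hci, funext fun j => ?_⟩
    rcases eq_or_ne j i with rfl | hj
    · simp
    · simp [hj, heq j hj]
  · rintro ⟨i, ν, hν, rfl⟩
    refine pi_covBy_iff.2 ⟨i, by simpa using hν, fun j hj => (update_of_ne hj _ _).symm⟩

lemma pi_lowerCovers_eq {d : ℕ} (f : Fin d → YoungDiagram) :
    {g : Fin d → YoungDiagram | g ⋖ f} = ⋃ i, update f i '' {ν | ν ⋖ f i} := by
  ext g
  simp only [Set.mem_setOf_eq, Set.mem_iUnion, Set.mem_image]
  constructor
  · intro h
    obtain ⟨i, hci, heq⟩ := pi_covBy_iff.1 h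
    refine ⟨i, g i, hci, funext fun j => ?_⟩
    rcases eq_or_ne j i with rfl | hj
    · simp
    · simp [hj, (heq j hj).symm]
  · rintro ⟨i, ν, hν, rfl⟩
    refine pi_covBy_iff.2 ⟨i, by simpa using hν, fun j hj => update_of_ne hj _ _⟩

end YoungAux

open YoungAux

/-- For a positive integer `d`, in the poset
`𝕐^{×d} = Fin d → YoungDiagram` of `d`-tuples of Young diagrams ordered
componentwise by containment, every element has finitely many covers and
finitely many lower covers, and the number of covers of each element equals
the number of its lower covers plus `d`: `𝕐^{×d}` is a `d`-differential
distributive lattice. -/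
theorem youngPower_isDifferential (d : ℕ) (hd : 0 < d)
    (f : Fin d → YoungDiagram) :
    {g : Fin d → YoungDiagram | f ⋖ g}.Finite ∧
    {g : Fin d → YoungDiagram | g ⋖ f}.Finite ∧
    {g : Fin d → YoungDiagram | f ⋖ g}.ncard =
      {g : Fin d → YoungDiagram | g ⋖ f}.ncard + d := by
  have hupfin : ∀ i, (update f i '' {ν | f i ⋖ ν}).Finite :=
    fun i => (covers_finite (f i)).image _
  have hdnfin : ∀ i, (update f i '' {ν | ν ⋖ f i}).Finite :=
    fun i => (lowerCovers_finite (f i)).image _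
  have hUf : {g : Fin d → YoungDiagram | f ⋖ g}.Finite := by
    rw [pi_covers_eq]; exact Set.finite_iUnion hupfin
  have hDf : {g : Fin d → YoungDiagram | g ⋖ f}.Finite := by
    rw [pi_lowerCovers_eq]; exact Set.finite_iUnion hdnfin
  refine ⟨hUf, hDf, ?_⟩
  have hbU : (⋃ i, update f i '' {ν | f i ⋖ ν}) =
      ⋃ i ∈ (Finset.univ : Finset (Fin d)), update f i '' {ν | f i ⋖ ν} := by
    simp
  have hbD : (⋃ i, update f i '' {ν | ν ⋖ f i}) =
      ⋃ i ∈ (Finset.univ : Finset (Fin d)), update f i '' {ν | ν ⋖ f i} := by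
    simp
  rw [pi_covers_eq, pi_lowerCovers_eq, hbU, hbD,
    ncard_biUnion _ _ (fun i _ => hupfin i)
      (fun i _ j _ hij =>
        disjoint_update_images f (fun k => {ν | f k ⋖ ν})
          (fun k ν hν => hν.lt.ne') hij),
    ncard_biUnion _ _ (fun i _ => hdnfin i)
      (fun i _ j _ hij =>
        disjoint_update_images f (fun k => {ν | ν ⋖ f k})
          (fun k ν hν => hν.lt.ne) hij)]
  have hterm : ∀ i : Fin d, (update f i '' {ν | f i ⋖ ν}).ncard =
      (update f i '' {ν | ν ⋖ f i}).ncard + 1 := by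
    intro i
    rw [Set.ncard_image_of_injective _ (update_injective f i),
      Set.ncard_image_of_injective _ (update_injective f i),
      ncard_covers (f i)]
  rw [Finset.sum_congr rfl (fun i _ => hterm i), Finset.sum_add_distrib]
  simp
end

section
/- Let d be a positive integer and let L be a distributive lattice with a least element such that for every x ∈ L the principal lower set {y ∈ L | y ≤ x} is finite, every x ∈ L is covered by finitely many elements, and for every x ∈ L the number of elements covering x equals the number of elements covered by x plus d. Then L is order-isomorphic to 𝕐^{×d}, the poset of functions from Fin d to Young diagrams ordered componentwise by containment. In particular, there exists exactly one d-differential distributive lattice up to isomorphism, namely 𝕐^{×d}. -/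
namespace UDDL

open Set

variable {L : Type*} [DistribLattice L] [OrderBot L]

/-- The poset of join-irreducible elements. -/
abbrev P (L : Type*) [DistribLattice L] [OrderBot L] := {a : L // SupIrred a}

lemma prime (p : P L) : SupPrime (p : L) := supPrime_iff_supIrred.2 p.2

/-- irreducibles below x -/
def Sx (x : L) : Set (P L) := {p | (p : L) ≤ x}

/-- elements addable to S -/
def Adds (S : Set (P L)) : Set (P L) := {p | p ∉ S ∧ ∀ q, q < p → q ∈ S}

/-- maximal elements of S -/
def Maxs (S : Set (P L)) : Set (P L) := {p | p ∈ S ∧ ∀ q ∈ S, ¬ p < q}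

lemma maxs_subset (S : Set (P L)) : Maxs S ⊆ S := fun _ h => h.1

lemma exists_maxs_above {S : Set (P L)} (hfin : S.Finite) {z : P L} (hz : z ∈ S) :
    ∃ w ∈ Maxs S, z ≤ w := by
  obtain ⟨w, hw, hmax⟩ := Set.Finite.exists_maximalFor id {q ∈ S | z ≤ q}
    (hfin.subset (Set.sep_subset _ _)) ⟨z, hz, le_rfl⟩
  refine ⟨w, ⟨hw.1, fun q hq hlt => ?_⟩, hw.2⟩
  exact hlt.not_ge (hmax ⟨hq, hw.2.trans hlt.le⟩ hlt.le)

section Gen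

variable (hlow : ∀ x : L, {y : L | y ≤ x}.Finite)

include hlow in
lemma finSx (x : L) : (Sx x).Finite := by
  have : Sx x = (fun p : P L => (p : L)) ⁻¹' {y : L | y ≤ x} := rfl
  rw [this]
  exact Set.Finite.preimage Subtype.val_injective.injOn (hlow x)

lemma Sx_mono {x y : L} (h : x ≤ y) : Sx x ⊆ Sx y := fun _ hp => le_trans hp h

include hlow in
/-- every element is a finite sup of irreducibles below it -/
lemma exists_finset_sup (x : L) :
    ∃ s : Finset L, (∀ a ∈ s, SupIrred a ∧ a ≤ x) ∧ s.sup id = x := by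
  classical
  obtain ⟨n, hn⟩ : ∃ n, (hlow x).toFinset.card ≤ n := ⟨_, le_rfl⟩
  induction n generalizing x with
  | zero =>
    exfalso
    have : x ∈ (hlow x).toFinset := by simp
    have := Finset.card_pos.2 ⟨x, this⟩
    omega
  | succ n ih =>
    by_cases hbot : x = ⊥
    · exact ⟨∅, by simp, by simp [hbot]⟩
    by_cases hirr : SupIrred x
    · exact ⟨{x}, by simp [hirr], by simp⟩
    · have hmin : ¬ IsMin x := by
        simp only [isMin_iff_eq_bot]; exact hbot
      rw [SupIrred, not_and_or] at hirr
      rcases hirr with h | h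
      · exact absurd hmin (by simpa using h)
      push_neg at h
      obtain ⟨b, c, hbc, hb, hc⟩ := h
      have hbx : b < x := lt_of_le_of_ne (hbc ▸ le_sup_left) hb
      have hcx : c < x := lt_of_le_of_ne (hbc ▸ le_sup_right) hc
      have key : ∀ y : L, y < x → (hlow y).toFinset.card ≤ n := by
        intro y hy
        have hsub : (hlow y).toFinset ⊂ (hlow x).toFinset := by
          rw [Finset.ssubset_iff_of_subset]
          · exact ⟨x, by simp, by simp [hy.not_ge]⟩
          · intro z hz
            simp only [Set.Finite.mem_toFinset, Set.mem_setOf_eq] at hz ⊢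
            exact hz.trans hy.le
        have := Finset.card_lt_card hsub
        omega
      obtain ⟨sb, hsb, hsb2⟩ := ih b (key b hbx)
      obtain ⟨sc, hsc, hsc2⟩ := ih c (key c hcx)
      refine ⟨sb ∪ sc, ?_, ?_⟩
      · intro a ha
        rcases Finset.mem_union.1 ha with h | h
        · exact ⟨(hsb a h).1, (hsb a h).2.trans hbx.le⟩
        · exact ⟨(hsc a h).1, (hsc a h).2.trans hcx.le⟩
      · rw [Finset.sup_union, hsb2, hsc2, hbc]

include hlow in
lemma le_of_Sx_subset {x y : L} (h : Sx x ⊆ Sx y) : x ≤ y := by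
  obtain ⟨s, hs, hsup⟩ := exists_finset_sup hlow x
  rw [← hsup]
  refine Finset.sup_le fun a ha => ?_
  have : (⟨a, (hs a ha).1⟩ : P L) ∈ Sx x := (hs a ha).2
  exact h this

include hlow in
lemma Sx_inj {x y : L} (h : Sx x = Sx y) : x = y :=
  le_antisymm (le_of_Sx_subset hlow h.le) (le_of_Sx_subset hlow h.ge)

/-- Sx of a sup of a down-closed finite set of irreducibles -/
lemma Sx_sup (T : Finset (P L)) (hT : ∀ p ∈ T, ∀ q : P L, q ≤ p → q ∈ T) :
    Sx (T.sup fun p => (p : L)) = ↑T := by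
  ext q
  simp only [Sx, Set.mem_setOf_eq, Finset.mem_coe]
  constructor
  · intro hq
    obtain ⟨p, hp, hqp⟩ := (prime q).le_finset_sup.1 hq
    exact hT p hp q hqp
  · intro hq
    exact Finset.le_sup (f := fun p : P L => (p : L)) hq

lemma Sx_insert {x : L} {p : P L} (hp : p ∈ Adds (Sx x)) :
    Sx (x ⊔ (p : L)) = insert p (Sx x) := by
  ext q
  simp only [Sx, Set.mem_setOf_eq, Set.mem_insert_iff]
  constructor
  · intro hq
    rcases (prime q).2 hq with h | h
    · exact Or.inr h
    · rcases eq_or_lt_of_le (Subtype.coe_le_coe.1 h) with h' | h'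
      · exact Or.inl (Subtype.coe_injective h')
      · exact Or.inr (hp.2 q h')
  · rintro (rfl | hq)
    · exact le_sup_right
    · exact le_trans hq le_sup_left

include hlow in
lemma cover_up_bij (x : L) :
    Set.BijOn (fun p : P L => x ⊔ ↑p) (Adds (Sx x)) {y : L | x ⋖ y} := by
  refine ⟨?_, ?_, ?_⟩
  · -- maps to
    intro p hp
    have hSp := Sx_insert (hp := hp)
    have hxlt : x < x ⊔ (p : L) :=
      lt_of_le_of_ne le_sup_left (fun h => hp.1 (show (p:L) ≤ x from h ▸ le_sup_right))
    refine ⟨hxlt, fun z hz hz2 => ?_⟩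
    have h1 : Sx x ⊆ Sx z := Sx_mono hz.le
    have h2 : Sx z ⊆ Sx (x ⊔ (p:L)) := Sx_mono hz2.le
    rw [hSp] at h2
    by_cases hpz : p ∈ Sx z
    · have heq : Sx z = insert p (Sx x) :=
        Set.Subset.antisymm h2 (Set.insert_subset hpz h1)
      rw [← hSp] at heq
      exact hz2.ne (Sx_inj hlow heq)
    · have heq : Sx z = Sx x := by
        apply Set.Subset.antisymm _ h1
        intro q hq
        rcases h2 hq with rfl | h
        · exact absurd hq hpz
        · exact h
      exact hz.ne' (Sx_inj hlow heq)
  · -- inj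
    intro p hp p' hp' h
    have heq : insert p (Sx x) = insert p' (Sx x) := by
      rw [← Sx_insert (hp := hp), ← Sx_insert (hp := hp')]
      simp only [Set.ext_iff, Sx, Set.mem_setOf_eq]
      intro q
      constructor <;> intro hq
      · exact le_trans hq (le_of_eq h)
      · exact le_trans hq (le_of_eq h.symm)
    have hmem : p ∈ insert p' (Sx x) := heq ▸ Set.mem_insert _ _
    rcases hmem with h' | h'
    · exact h'
    · exact absurd h' hp.1
  · -- surj
    intro y hy
    simp only [Set.mem_setOf_eq] at hy
    have hdne : (Sx y \ Sx x).Nonempty := by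
      rw [Set.diff_nonempty]
      intro hsub
      exact absurd (le_of_Sx_subset hlow hsub) hy.lt.not_ge
    obtain ⟨p, hpd, hpmin⟩ := Set.Finite.exists_minimalFor id (Sx y \ Sx x)
      ((finSx hlow y).subset Set.diff_subset) hdne
    have hpAdds : p ∈ Adds (Sx x) := by
      refine ⟨hpd.2, fun q hq => ?_⟩
      by_contra hqx
      have hqd : q ∈ Sx y \ Sx x := ⟨le_trans (Subtype.coe_le_coe.2 hq.le) hpd.1, hqx⟩
      exact hq.not_ge (hpmin hqd hq.le)
    refine ⟨p, hpAdds, ?_⟩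
    have h1 : x < x ⊔ (p:L) :=
      lt_of_le_of_ne le_sup_left (fun h => hpAdds.1 (show (p:L) ≤ x from h ▸ le_sup_right))
    have h2 : x ⊔ (p:L) ≤ y := sup_le hy.lt.le hpd.1
    rcases lt_or_eq_of_le h2 with h3 | h3
    · exact absurd h3 (hy.2 h1)
    · exact h3

/-- the finite set Sx x \ {p} as a Finset -/
noncomputable def dsup (hlow : ∀ x : L, {y : L | y ≤ x}.Finite) (x : L) (p : P L) : L :=
  (((finSx hlow x).diff (t := {p})).toFinset.sup fun q => (q : L))

include hlow in
lemma Sx_dsup {x : L} {p : P L} (hp : p ∈ Maxs (Sx x)) :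
    Sx (dsup hlow x p) = Sx x \ {p} := by
  rw [dsup, Sx_sup]
  · simp
  · intro r hr q hqr
    simp only [Set.Finite.mem_toFinset, Set.mem_diff, Set.mem_singleton_iff] at hr ⊢
    refine ⟨le_trans (Subtype.coe_le_coe.2 hqr) hr.1, ?_⟩
    rintro rfl
    rcases eq_or_lt_of_le hqr with rfl | hlt
    · exact hr.2 rfl
    · exact hp.2 r hr.1 hlt

include hlow in
lemma cover_down_bij (x : L) :
    Set.BijOn (dsup hlow x) (Maxs (Sx x)) {y : L | y ⋖ x} := by
  refine ⟨?_, ?_, ?_⟩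
  · intro p hp
    have hS := Sx_dsup hlow hp
    have hyx : dsup hlow x p < x := by
      rcases lt_or_eq_of_le (le_of_Sx_subset hlow (hS ▸ Set.diff_subset)) with h | h
      · exact h
      · exfalso
        have : p ∈ Sx x \ {p} := by rw [← hS, h]; exact hp.1
        simp at this
    refine ⟨hyx, fun z hz hz2 => ?_⟩
    have h1 : Sx _ ⊆ Sx z := Sx_mono hz.le
    have h2 : Sx z ⊆ Sx x := Sx_mono hz2.le
    rw [hS] at h1
    by_cases hpz : p ∈ Sx z
    · have heq : Sx z = Sx x := by
        apply Set.Subset.antisymm h2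
        intro q hq
        by_cases hqp : q = p
        · exact hqp ▸ hpz
        · exact h1 ⟨hq, hqp⟩
      exact hz2.ne (Sx_inj hlow heq)
    · have heq : Sx z = Sx x \ {p} := by
        apply Set.Subset.antisymm _ h1
        intro q hq
        exact ⟨h2 hq, fun h => hpz (h ▸ hq)⟩
      rw [← hS] at heq
      exact hz.ne' (Sx_inj hlow heq)
  · intro p hp p' hp' h
    by_contra hne
    have h1 := Sx_dsup hlow hp
    have h2 := Sx_dsup hlow hp'
    rw [h] at h1
    rw [h1] at h2
    have hmem : p' ∈ Sx x \ {p} := ⟨hp'.1, fun hh => hne ((Set.mem_singleton_iff.1 hh).symm)⟩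
    rw [h2] at hmem
    exact hmem.2 rfl
  · intro y hy
    simp only [Set.mem_setOf_eq] at hy
    have hdne : (Sx x \ Sx y).Nonempty := by
      rw [Set.diff_nonempty]
      intro hsub
      exact absurd (le_of_Sx_subset hlow hsub) hy.lt.not_ge
    obtain ⟨p, hpd, hpmax⟩ := Set.Finite.exists_maximalFor id (Sx x \ Sx y)
      ((finSx hlow x).subset Set.diff_subset) hdne
    have hcup : ∀ q ∈ Sx x \ Sx y, y ⊔ (q:L) = x := by
      intro q hq
      have h1 : y < y ⊔ (q:L) :=
        lt_of_le_of_ne le_sup_left (fun h => hq.2 (show (q:L) ≤ y from h ▸ le_sup_right))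
      have h2 : y ⊔ (q:L) ≤ x := sup_le hy.lt.le hq.1
      rcases lt_or_eq_of_le h2 with h3 | h3
      · exact absurd h3 (hy.2 h1)
      · exact h3
    have hpMaxs : p ∈ Maxs (Sx x) := by
      refine ⟨hpd.1, fun q hq hlt => ?_⟩
      by_cases hqy : q ∈ Sx y
      · exact hpd.2 (le_trans (Subtype.coe_le_coe.2 hlt.le) hqy)
      · exact hlt.not_ge (hpmax ⟨hq, hqy⟩ hlt.le)
    refine ⟨p, hpMaxs, ?_⟩
    have hSy : Sx y = Sx x \ {p} := by
      apply Set.Subset.antisymm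
      · intro q hq
        refine ⟨Sx_mono hy.lt.le hq, ?_⟩
        rintro rfl
        exact hpd.2 hq
      · intro q hq
        by_contra hqy
        have hqd : q ∈ Sx x \ Sx y := ⟨hq.1, hqy⟩
        have hx := hcup q hqd
        have hple : (p:L) ≤ y ⊔ (q:L) := hx.symm ▸ hpd.1
        rcases (prime p).2 hple with h | h
        · exact hpd.2 h
        · rcases eq_or_lt_of_le (show p ≤ q from h) with heq | hlt
          · exact hq.2 heq.symm
          · exact hlt.not_ge (hpmax hqd hlt.le)
    apply Sx_inj hlow
    rw [Sx_dsup hlow hpMaxs, hSy]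

end Gen

section Star

variable (hlow : ∀ x : L, {y : L | y ≤ x}.Finite)
variable {d : ℕ}
variable (hcov : ∀ x : L, {y : L | x ⋖ y}.Finite)
variable (hdiff : ∀ x : L, {y : L | x ⋖ y}.ncard = {y : L | y ⋖ x}.ncard + d)

include hlow hcov hdiff

lemma star {S : Set (P L)} (hfin : S.Finite) (hls : IsLowerSet S) :
    (Adds S).Finite ∧ (Adds S).ncard = (Maxs S).ncard + d := by
  classical
  set T := hfin.toFinset with hT
  have hTdc : ∀ p ∈ T, ∀ q : P L, q ≤ p → q ∈ T := by
    intro p hp q hq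
    simp only [hT, Set.Finite.mem_toFinset] at *
    exact hls hq hp
  set x := T.sup (fun p => (p:L)) with hx
  have hSx : Sx x = S := by
    rw [hx, Sx_sup _ hTdc]
    simp [hT]
  have hup := cover_up_bij hlow x
  have hdown := cover_down_bij hlow x
  rw [hSx] at hup hdown
  have hAfin : (Adds S).Finite := Set.Finite.of_finite_image (hup.image_eq ▸ hcov x) hup.injOn
  have hA : (Adds S).ncard = {y : L | x ⋖ y}.ncard := by
    rw [← hup.image_eq, Set.ncard_image_of_injOn hup.injOn]
  have hM : (Maxs S).ncard = {y : L | y ⋖ x}.ncard := by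
    rw [← hdown.image_eq, Set.ncard_image_of_injOn hdown.injOn]
  exact ⟨hAfin, by rw [hA, hM]; exact hdiff x⟩

lemma dagger {S : Set (P L)} (hfin : S.Finite) (hls : IsLowerSet S) {p : P L}
    (hp : p ∈ Adds S) :
    {r : P L | p < r ∧ ∀ q, q < r → q ∈ S ∨ q = p}.ncard
      + {q : P L | q ∈ Maxs S ∧ q < p}.ncard = 2 := by
  classical
  have hpnotinS : p ∉ S := hp.1
  have hS' : IsLowerSet (insert p S) := by
    intro a b hba ha
    rcases ha with rfl | ha
    · rcases eq_or_lt_of_le hba with rfl | h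
      · exact Set.mem_insert _ _
      · exact Set.mem_insert_of_mem _ (hp.2 b h)
    · exact Set.mem_insert_of_mem _ (hls hba ha)
  have hfin' : (insert p S).Finite := hfin.insert p
  obtain ⟨hAfin, hstar⟩ := star hlow hcov hdiff hfin hls
  obtain ⟨hAfin', hstar'⟩ := star hlow hcov hdiff hfin' hS'
  have hpmaxins : ∀ q ∈ S, ¬ p < q := fun q hq hlt => hpnotinS (hls hlt.le hq)
  set C : Set (P L) := {q | q ∈ Maxs S ∧ q < p} with hC
  set R : Set (P L) := {q | q ∈ Maxs S ∧ ¬ q < p} with hR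
  set N : Set (P L) := {r : P L | p < r ∧ ∀ q, q < r → q ∈ S ∨ q = p} with hN
  have hMfin : (Maxs S).Finite := hfin.subset (maxs_subset S)
  have hMsplit : (Maxs S).ncard = C.ncard + R.ncard := by
    have hdisj : Disjoint C R := by
      rw [Set.disjoint_left]
      rintro q ⟨_, hq2⟩ ⟨_, hq4⟩
      exact hq4 hq2
    have hcup : Maxs S = C ∪ R := by
      ext q
      simp only [hC, hR, Set.mem_union, Set.mem_setOf_eq]
      tauto
    rw [hcup, Set.ncard_union_eq hdisj (hMfin.subset (by rw [hcup]; exact Set.subset_union_left))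
      (hMfin.subset (by rw [hcup]; exact Set.subset_union_right))]
  have hMaxs' : Maxs (insert p S) = insert p R := by
    ext r
    constructor
    · rintro ⟨hr1, hr2⟩
      rcases hr1 with rfl | hr1
      · exact Set.mem_insert _ _
      · refine Set.mem_insert_of_mem _ ⟨⟨hr1, fun q hq => hr2 q (Set.mem_insert_of_mem _ hq)⟩, ?_⟩
        exact hr2 p (Set.mem_insert _ _)
    · rintro (rfl | ⟨⟨hr1, hr2⟩, hr3⟩)
      · refine ⟨Set.mem_insert _ _, ?_⟩
        rintro q (rfl | hq)
        · exact lt_irrefl _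
        · exact hpmaxins q hq
      · refine ⟨Set.mem_insert_of_mem _ hr1, ?_⟩
        rintro q (rfl | hq)
        · exact hr3
        · exact hr2 q hq
  have hpnotinR : p ∉ R := fun h => hpnotinS h.1.1
  have hM' : (Maxs (insert p S)).ncard = R.ncard + 1 := by
    rw [hMaxs', Set.ncard_insert_of_notMem hpnotinR (hMfin.subset (fun q hq => hq.1))]
  have hAsplit : Adds (insert p S) = (Adds S \ {p}) ∪ N := by
    ext r
    constructor
    · rintro ⟨hr1, hr2⟩
      by_cases hpr : p < r
      · refine Or.inr ⟨hpr, fun q hq => ?_⟩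
        rcases hr2 q hq with rfl | h
        · exact Or.inr rfl
        · exact Or.inl h
      · refine Or.inl ⟨⟨fun h => hr1 (Set.mem_insert_of_mem _ h), fun q hq => ?_⟩, ?_⟩
        · rcases hr2 q hq with rfl | h
          · exact absurd hq hpr
          · exact h
        · exact fun h => hr1 (h ▸ Set.mem_insert _ _)
    · rintro (⟨⟨hr1, hr2⟩, hr3⟩ | ⟨hr1, hr2⟩)
      · refine ⟨?_, fun q hq => Set.mem_insert_of_mem _ (hr2 q hq)⟩
        rintro (rfl | h)
        · exact hr3 rfl
        · exact hr1 h
      · refine ⟨?_, fun q hq => ?_⟩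
        · rintro (rfl | h)
          · exact lt_irrefl _ hr1
          · exact hpnotinS (hls hr1.le h)
        · rcases hr2 q hq with h | rfl
          · exact Set.mem_insert_of_mem _ h
          · exact Set.mem_insert _ _
  have hNfin : N.Finite := hAfin'.subset (by rw [hAsplit]; exact Set.subset_union_right)
  have hdisj2 : Disjoint (Adds S \ {p}) N := by
    rw [Set.disjoint_left]
    rintro r ⟨⟨_, hr2⟩, _⟩ ⟨hr3, _⟩
    exact hpnotinS (hr2 p hr3)
  have hA' : (Adds (insert p S)).ncard = (Adds S \ {p}).ncard + N.ncard := by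
    rw [hAsplit, Set.ncard_union_eq hdisj2 hAfin.diff hNfin]
  have hA0 : (Adds S \ {p}).ncard + 1 = (Adds S).ncard :=
    Set.ncard_diff_singleton_add_one hp hAfin
  omega


end Star

/-- strict lower set of p, as a set -/
def SL (p : P L) : Set (P L) := {q | q < p}

lemma SL_finite (hlow : ∀ x : L, {y : L | y ≤ x}.Finite) (p : P L) : (SL p).Finite :=
  (finSx hlow (p : L)).subset (fun q hq => (show (q:L) ≤ (p:L) from le_of_lt hq))

lemma SL_lower (p : P L) : IsLowerSet (SL p) := fun _ b hba ha => lt_of_le_of_lt hba ha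

lemma mem_adds_SL (p : P L) : p ∈ Adds (SL p) := ⟨lt_irrefl p, fun _ h => h⟩

lemma f1 {d : ℕ} (hlow : ∀ x : L, {y : L | y ≤ x}.Finite)
    (hcov : ∀ x : L, {y : L | x ⋖ y}.Finite)
    (hdiff : ∀ x : L, {y : L | x ⋖ y}.ncard = {y : L | y ⋖ x}.ncard + d) (p : P L) :
    {r : P L | SL r = Set.Iic p}.ncard + (Maxs (SL p)).ncard = 2 := by
  have hdag := dagger hlow hcov hdiff (SL_finite hlow p) (SL_lower p) (mem_adds_SL p)
  have h1 : {r : P L | p < r ∧ ∀ q, q < r → q ∈ SL p ∨ q = p} = {r : P L | SL r = Set.Iic p} := by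
    ext r
    simp only [Set.mem_setOf_eq]
    constructor
    · rintro ⟨hr1, hr2⟩
      ext q
      simp only [SL, Set.mem_setOf_eq, Set.mem_Iic]
      constructor
      · intro hq
        rcases hr2 q hq with h | rfl
        · exact le_of_lt h
        · exact le_rfl
      · intro hq
        exact lt_of_le_of_lt hq hr1
    · intro h
      have hpr : p < r := by
        have : p ∈ SL r := by rw [h]; exact Set.mem_Iic.2 le_rfl
        exact this
      refine ⟨hpr, fun q hq => ?_⟩
      have : q ∈ Set.Iic p := by rw [← h]; exact hq
      rcases eq_or_lt_of_le (Set.mem_Iic.1 this) with rfl | hlt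
      · exact Or.inr rfl
      · exact Or.inl hlt
  have h2 : {q : P L | q ∈ Maxs (SL p) ∧ q < p} = Maxs (SL p) := by
    ext q
    simp only [Set.mem_setOf_eq]
    exact ⟨fun h => h.1, fun h => ⟨h, h.1⟩⟩
  rw [h1, h2] at hdag
  exact hdag


/-- a labelled grid of irreducibles up to level n -/
structure Grid (L : Type*) [DistribLattice L] [OrderBot L] (d n : ℕ) where
  f : Fin d → ℕ → ℕ → P L
  ord : ∀ ⦃k i j k' i' j'⦄, i + j ≤ n → i' + j' ≤ n →
      (f k i j ≤ f k' i' j' ↔ (k = k' ∧ i ≤ i' ∧ j ≤ j'))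
  dc : ∀ ⦃k i j⦄, i + j ≤ n → ∀ q, q ≤ f k i j → ∃ k' i' j', i' + j' ≤ n ∧ f k' i' j' = q
  cmpl : ∀ p : P L, (∀ q, q < p → ∃ k i j, i + j < n ∧ f k i j = q) →
      ∃ k i j, i + j ≤ n ∧ f k i j = p

namespace Grid

variable {d n : ℕ}

/-- the set of irreducibles in the grid -/
def S (Γ : Grid L d n) : Set (P L) := {p | ∃ k i j, i + j ≤ n ∧ Γ.f k i j = p}

lemma inj (Γ : Grid L d n) ⦃k i j k' i' j' : _⦄ (h1 : i + j ≤ n) (h2 : i' + j' ≤ n)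
    (h : Γ.f k i j = Γ.f k' i' j') : k = k' ∧ i = i' ∧ j = j' := by
  have e1 := (Γ.ord h1 h2).1 h.le
  have e2 := (Γ.ord h2 h1).1 h.ge
  exact ⟨e1.1, le_antisymm e1.2.1 e2.2.1, le_antisymm e1.2.2 e2.2.2⟩

lemma lt_iff (Γ : Grid L d n) ⦃k i j k' i' j' : _⦄ (h1 : i + j ≤ n) (h2 : i' + j' ≤ n) :
    Γ.f k i j < Γ.f k' i' j' ↔ (k = k' ∧ i ≤ i' ∧ j ≤ j' ∧ ¬(i = i' ∧ j = j')) := by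
  rw [lt_iff_le_and_ne, Γ.ord h1 h2]
  constructor
  · rintro ⟨⟨rfl, hi, hj⟩, hne⟩
    refine ⟨rfl, hi, hj, fun ⟨hh1, hh2⟩ => hne (by rw [hh1, hh2])⟩
  · rintro ⟨rfl, hi, hj, hne⟩
    refine ⟨⟨rfl, hi, hj⟩, fun h => ?_⟩
    obtain ⟨-, h1, h2⟩ := Γ.inj h1 h2 h
    exact hne ⟨h1, h2⟩

lemma S_finite (Γ : Grid L d n) : Γ.S.Finite := by
  have : Γ.S ⊆ (fun t : Fin d × ℕ × ℕ => Γ.f t.1 t.2.1 t.2.2) ''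
      ((Set.univ : Set (Fin d)) ×ˢ (Set.Iic n ×ˢ Set.Iic n)) := by
    rintro p ⟨k, i, j, hij, rfl⟩
    exact ⟨(k, i, j), ⟨trivial, by constructor <;> simp <;> omega⟩, rfl⟩
  exact Set.Finite.subset (Set.Finite.image _ (by
    have : ((Set.univ : Set (Fin d)) ×ˢ (Set.Iic n ×ˢ Set.Iic n)).Finite :=
      Set.Finite.prod (Set.finite_univ) (Set.Finite.prod (Set.finite_Iic n) (Set.finite_Iic n))
    exact this)) this

lemma S_lower (Γ : Grid L d n) : IsLowerSet Γ.S := by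
  rintro p q hqp ⟨k, i, j, hij, rfl⟩
  obtain ⟨k', i', j', h1, h2⟩ := Γ.dc hij q hqp
  exact ⟨k', i', j', h1, h2⟩

lemma mem_S (Γ : Grid L d n) {k i j} (h : i + j ≤ n) : Γ.f k i j ∈ Γ.S := ⟨k, i, j, h, rfl⟩

/-- diagonal elements are maximal -/
lemma diag_maxs (Γ : Grid L d n) {k i j} (h : i + j = n) : Γ.f k i j ∈ Maxs Γ.S := by
  refine ⟨Γ.mem_S h.le, ?_⟩
  rintro q ⟨k', i', j', h1, rfl⟩ hlt
  rw [Γ.lt_iff h.le h1] at hlt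
  obtain ⟨rfl, hi, hj, hne⟩ := hlt
  omega

lemma maxs_eq (Γ : Grid L d n) : Maxs Γ.S = {p | ∃ k i j, i + j = n ∧ Γ.f k i j = p} := by
  apply Set.Subset.antisymm
  · rintro p ⟨⟨k, i, j, hij, rfl⟩, hmax⟩
    rcases eq_or_lt_of_le hij with h | h
    · exact ⟨k, i, j, h, rfl⟩
    · exfalso
      refine hmax (Γ.f k (i+1) j) (Γ.mem_S (by omega)) ?_
      rw [Γ.lt_iff hij (by omega)]
      exact ⟨rfl, by omega, le_rfl, by omega⟩
  · rintro p ⟨k, i, j, hij, rfl⟩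
    exact Γ.diag_maxs hij

lemma maxs_ncard (Γ : Grid L d n) : (Maxs Γ.S).ncard = d * (n + 1) := by
  classical
  have himg : Maxs Γ.S = (fun t : Fin d × Fin (n+1) => Γ.f t.1 t.2 (n - t.2)) '' Set.univ := by
    rw [maxs_eq]
    apply Set.Subset.antisymm
    · rintro p ⟨k, i, j, hij, rfl⟩
      refine ⟨(k, ⟨i, by omega⟩), trivial, ?_⟩
      simp only
      congr 1
      omega
    · rintro p ⟨⟨k, i⟩, -, rfl⟩
      exact ⟨k, i, n - i, by omega, rfl⟩
  rw [himg, Set.ncard_image_of_injOn, Set.ncard_univ, Nat.card_eq_fintype_card]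
  · simp [Fintype.card_prod, mul_comm]
  · rintro ⟨k, i⟩ - ⟨k', i'⟩ - h
    obtain ⟨h1, h2, -⟩ := Γ.inj (by omega) (by omega) h
    have : (i : ℕ) = i' := h2
    simp only [Prod.mk.injEq]
    exact ⟨h1, Fin.ext this⟩

end Grid

section Covers

variable {d : ℕ}
variable (hlow : ∀ x : L, {y : L | y ≤ x}.Finite)
variable (hcov : ∀ x : L, {y : L | x ⋖ y}.Finite)
variable (hdiff : ∀ x : L, {y : L | x ⋖ y}.ncard = {y : L | y ⋖ x}.ncard + d)

include hlow hcov hdiff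

lemma two_covers {n : ℕ} (Γ : Grid L d n) {k : Fin d} {x y : ℕ} (hxy : x + y = n) :
    {r : P L | Γ.f k x y < r ∧ SL r ⊆ Γ.S}.ncard = 2 := by
  classical
  set v := Γ.f k x y with hv
  have hvS : v ∈ Γ.S := Γ.mem_S hxy.le
  have hvmax : v ∈ Maxs Γ.S := Γ.diag_maxs hxy
  set S' := Γ.S \ {v} with hS'
  have hfin' : S'.Finite := (Γ.S_finite).subset Set.diff_subset
  have hls' : IsLowerSet S' := by
    rintro p q hqp ⟨hpS, hpv⟩
    refine ⟨Γ.S_lower hqp hpS, ?_⟩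
    intro h
    rw [Set.mem_singleton_iff] at h
    subst h
    rcases eq_or_lt_of_le hqp with rfl | hlt
    · exact hpv rfl
    · exact hvmax.2 p hpS hlt
  have hvadd : v ∈ Adds S' := by
    refine ⟨fun h => h.2 rfl, fun q hq => ⟨Γ.S_lower hq.le hvS, fun h => ?_⟩⟩
    rw [Set.mem_singleton_iff] at h
    subst h
    exact lt_irrefl _ hq
  have hdag := dagger hlow hcov hdiff hfin' hls' hvadd
  have hc : {q : P L | q ∈ Maxs S' ∧ q < v} = ∅ := by
    ext q
    simp only [Set.mem_setOf_eq, Set.mem_empty_iff_false, iff_false, not_and]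
    rintro ⟨⟨hqS', hqv⟩, hqmax⟩ hqlt
    obtain ⟨k2, x2, y2, h2, hq⟩ := Γ.dc hxy.le q hqlt.le
    obtain ⟨hk2, hx2, hy2⟩ := (Γ.ord h2 hxy.le).1 (hq.le.trans hqlt.le)
    rw [hk2] at hq
    subst hq
    have hne : ¬(x2 = x ∧ y2 = y) := by
      rintro ⟨rfl, rfl⟩
      exact lt_irrefl _ hqlt
    by_cases hsum : x2 + y2 = n
    · exact hne (by omega)
    · have hsum' : x2 + y2 < n := lt_of_le_of_ne h2 hsum
      by_cases hw : Γ.f k (x2+1) y2 = v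
      · obtain ⟨-, e1, e2⟩ := Γ.inj (by omega) hxy.le hw
        refine hqmax (Γ.f k x2 (y2+1)) ⟨Γ.mem_S (by omega), fun h => ?_⟩ ?_
        · rw [Set.mem_singleton_iff] at h
          obtain ⟨-, e3, e4⟩ := Γ.inj (by omega) hxy.le h
          omega
        · rw [Γ.lt_iff h2 (by omega)]
          exact ⟨rfl, le_rfl, by omega, by omega⟩
      · refine hqmax (Γ.f k (x2+1) y2) ⟨Γ.mem_S (by omega), fun h => hw h⟩ ?_
        rw [Γ.lt_iff h2 (by omega)]
        exact ⟨rfl, by omega, le_rfl, by omega⟩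
  have hNid : {r : P L | v < r ∧ ∀ q, q < r → q ∈ S' ∨ q = v}
      = {r : P L | v < r ∧ SL r ⊆ Γ.S} := by
    ext r
    simp only [Set.mem_setOf_eq]
    constructor
    · rintro ⟨h1, h2⟩
      refine ⟨h1, fun q hq => ?_⟩
      rcases h2 q hq with h | rfl
      · exact h.1
      · exact hvS
    · rintro ⟨h1, h2⟩
      refine ⟨h1, fun q hq => ?_⟩
      by_cases hqv : q = v
      · exact Or.inr hqv
      · exact Or.inl ⟨h2 hq, hqv⟩
  rw [hNid, hc] at hdag
  simpa using hdag

lemma one_cover_avoiding {n : ℕ} (Γ : Grid L d n) {k : Fin d} {a b : ℕ} (hab : a + b + 1 = n) :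
    {r : P L | Γ.f k a (b+1) < r ∧ SL r ⊆ Γ.S \ {Γ.f k (a+1) b}}.ncard = 1 := by
  classical
  set u := Γ.f k (a+1) b with hu
  set v := Γ.f k a (b+1) with hv
  have hsumu : (a+1) + b = n := by omega
  have hsumv : a + (b+1) = n := by omega
  have hvS : v ∈ Γ.S := Γ.mem_S hsumv.le
  have huS : u ∈ Γ.S := Γ.mem_S hsumu.le
  have hvmax : v ∈ Maxs Γ.S := Γ.diag_maxs hsumv
  have humax : u ∈ Maxs Γ.S := Γ.diag_maxs hsumu
  have huv : u ≠ v := by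
    intro h
    obtain ⟨-, e1, -⟩ := Γ.inj hsumu.le hsumv.le h
    omega
  set S' := Γ.S \ {u, v} with hS'
  have hfin' : S'.Finite := (Γ.S_finite).subset Set.diff_subset
  have hls' : IsLowerSet S' := by
    rintro p q hqp ⟨hpS, hpuv⟩
    refine ⟨Γ.S_lower hqp hpS, ?_⟩
    intro h
    rcases h with rfl | h
    · rcases eq_or_lt_of_le hqp with rfl | hlt
      · exact hpuv (Or.inl rfl)
      · exact humax.2 p hpS hlt
    · rw [Set.mem_singleton_iff] at h
      subst h
      rcases eq_or_lt_of_le hqp with rfl | hlt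
      · exact hpuv (Or.inr rfl)
      · exact hvmax.2 p hpS hlt
  have hvadd : v ∈ Adds S' := by
    refine ⟨fun h => h.2 (Or.inr rfl), fun q hq => ⟨Γ.S_lower hq.le hvS, fun h => ?_⟩⟩
    rcases h with rfl | h
    · -- q = u and q < v : impossible
      rw [Γ.lt_iff hsumu.le hsumv.le] at hq
      omega
    · rw [Set.mem_singleton_iff] at h
      subst h
      exact lt_irrefl _ hq
  have hdag := dagger hlow hcov hdiff hfin' hls' hvadd
  have hc : {q : P L | q ∈ Maxs S' ∧ q < v} = {Γ.f k a b} := by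
    ext q
    simp only [Set.mem_setOf_eq, Set.mem_singleton_iff]
    constructor
    · rintro ⟨⟨⟨hqS, hquv⟩, hqmax⟩, hqlt⟩
      obtain ⟨k2, x2, y2, h2, hq⟩ := Γ.dc hsumv.le q hqlt.le
      obtain ⟨hk2, hx2, hy2⟩ := (Γ.ord h2 hsumv.le).1 (hq.le.trans hqlt.le)
      rw [hk2] at hq
      subst hq
      have hne : ¬(x2 = a ∧ y2 = b+1) := by
        rintro ⟨rfl, rfl⟩
        exact lt_irrefl _ hqlt
      by_cases hsum : x2 + y2 = n
      · exact absurd (by omega : x2 = a ∧ y2 = b + 1) hne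
      · have hsum' : x2 + y2 < n := lt_of_le_of_ne h2 hsum
        by_cases hwv : Γ.f k (x2+1) y2 = v
        · obtain ⟨-, e1, e2⟩ := Γ.inj (by omega) hsumv.le hwv
          exfalso
          refine hqmax (Γ.f k x2 (y2+1)) ⟨Γ.mem_S (by omega), fun h => ?_⟩ ?_
          · rcases h with h | h
            · obtain ⟨-, e3, e4⟩ := Γ.inj (by omega) hsumu.le h
              omega
            · rw [Set.mem_singleton_iff] at h
              obtain ⟨-, e3, e4⟩ := Γ.inj (by omega) hsumv.le h
              omega
          · rw [Γ.lt_iff h2 (by omega)]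
            exact ⟨rfl, le_rfl, by omega, by omega⟩
        · by_cases hwu : Γ.f k (x2+1) y2 = u
          · obtain ⟨-, e1, e2⟩ := Γ.inj (by omega) hsumu.le hwu
            congr 1 <;> omega
          · exfalso
            refine hqmax (Γ.f k (x2+1) y2) ⟨Γ.mem_S (by omega), fun h => ?_⟩ ?_
            · rcases h with h | h
              · exact hwu h
              · exact hwv h
            · rw [Γ.lt_iff h2 (by omega)]
              exact ⟨rfl, by omega, le_rfl, by omega⟩
    · rintro rfl
      have hq0sum : a + b ≤ n := by omega
      refine ⟨⟨⟨Γ.mem_S hq0sum, fun h => ?_⟩, ?_⟩, ?_⟩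
      · rcases h with h | h
        · obtain ⟨-, e1, -⟩ := Γ.inj hq0sum hsumu.le h
          omega
        · rw [Set.mem_singleton_iff] at h
          obtain ⟨-, -, e2⟩ := Γ.inj hq0sum hsumv.le h
          omega
      · rintro w ⟨hwS, hwuv⟩ hlt
        obtain ⟨k3, x3, y3, h3, hw⟩ := hwS
        have hlt2 : Γ.f k a b < Γ.f k3 x3 y3 := hw.symm ▸ hlt
        rw [Γ.lt_iff hq0sum h3] at hlt2
        obtain ⟨hk3, hx3, hy3, hne3⟩ := hlt2
        rw [← hk3] at hw
        subst hw
        have : (x3 = a + 1 ∧ y3 = b) ∨ (x3 = a ∧ y3 = b + 1) := by omega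
        rcases this with ⟨rfl, rfl⟩ | ⟨rfl, rfl⟩
        · exact hwuv (Or.inl rfl)
        · exact hwuv (Or.inr rfl)
      · rw [Γ.lt_iff hq0sum hsumv.le]
        exact ⟨rfl, le_rfl, by omega, by omega⟩
  have hNid : {r : P L | v < r ∧ ∀ q, q < r → q ∈ S' ∨ q = v}
      = {r : P L | v < r ∧ SL r ⊆ Γ.S \ {u}} := by
    ext r
    simp only [Set.mem_setOf_eq]
    constructor
    · rintro ⟨h1, h2⟩
      refine ⟨h1, fun q hq => ?_⟩
      rcases h2 q hq with ⟨hqS, hquv⟩ | rfl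
      · exact ⟨hqS, fun h => hquv (Or.inl (Set.mem_singleton_iff.1 h))⟩
      · exact ⟨hvS, fun h => huv (Set.mem_singleton_iff.1 h).symm⟩
    · rintro ⟨h1, h2⟩
      refine ⟨h1, fun q hq => ?_⟩
      by_cases hqv : q = v
      · exact Or.inr hqv
      · obtain ⟨hqS, hqu⟩ := h2 hq
        refine Or.inl ⟨hqS, fun h => ?_⟩
        rcases h with h | h
        · exact hqu (Set.mem_singleton_iff.2 h)
        · exact hqv (Set.mem_singleton_iff.1 h)
  rw [hNid, hc] at hdag
  simpa using hdag

lemma pair_unique {n : ℕ} (Γ : Grid L d n) {k : Fin d} {a b : ℕ} (hab : a + b + 1 = n) :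
    ∃! r : P L, SL r = Set.Iic (Γ.f k (a+1) b) ∪ Set.Iic (Γ.f k a (b+1)) := by
  classical
  set u := Γ.f k (a+1) b with hu
  set v := Γ.f k a (b+1) with hv
  have hsumu : (a+1) + b = n := by omega
  have hsumv : a + (b+1) = n := by omega
  have hvS : v ∈ Γ.S := Γ.mem_S hsumv.le
  have huS : u ∈ Γ.S := Γ.mem_S hsumu.le
  have hvmax : v ∈ Maxs Γ.S := Γ.diag_maxs hsumv
  have humax : u ∈ Maxs Γ.S := Γ.diag_maxs hsumu
  have huv : u ≠ v := by
    intro h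
    obtain ⟨-, e1, -⟩ := Γ.inj hsumu.le hsumv.le h
    omega
  set A := {r : P L | v < r ∧ SL r ⊆ Γ.S} with hA
  set B := {r : P L | v < r ∧ SL r ⊆ Γ.S \ {u}} with hB
  have hAcard : A.ncard = 2 := two_covers hlow hcov hdiff Γ hsumv
  have hBcard : B.ncard = 1 := one_cover_avoiding hlow hcov hdiff Γ hab
  have hBA : B ⊆ A := by
    rintro r ⟨h1, h2⟩
    exact ⟨h1, fun q hq => (h2 hq).1⟩
  have hAfin : A.Finite := by
    have hsub : A ⊆ Adds Γ.S := by
      rintro r ⟨h1, h2⟩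
      refine ⟨fun h => hvmax.2 r h h1, fun q hq => h2 hq⟩
    exact ((star hlow hcov hdiff Γ.S_finite Γ.S_lower).1).subset hsub
  have hdiffcard : (A \ B).ncard = 1 := by
    have := Set.ncard_diff_add_ncard_of_subset hBA hAfin
    omega
  obtain ⟨r0, hr0⟩ := Set.ncard_eq_one.1 hdiffcard
  have hr0mem : r0 ∈ A \ B := by rw [hr0]; exact Set.mem_singleton _
  obtain ⟨⟨hvr0, hSLr0⟩, hr0B⟩ := hr0mem
  have hur0 : u < r0 := by
    by_contra hc
    refine hr0B ⟨hvr0, fun q hq => ⟨hSLr0 hq, fun h => ?_⟩⟩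
    rw [Set.mem_singleton_iff] at h
    subst h
    exact hc hq
  have hMr : Maxs (SL r0) = {u, v} := by
    have hsub : ({u, v} : Set (P L)) ⊆ Maxs (SL r0) := by
      rintro w (rfl | h)
      · exact ⟨hur0, fun q hq hlt => humax.2 q (hSLr0 hq) hlt⟩
      · rw [Set.mem_singleton_iff] at h
        subst h
        exact ⟨hvr0, fun q hq hlt => hvmax.2 q (hSLr0 hq) hlt⟩
    have hle : (Maxs (SL r0)).ncard ≤ 2 := by
      have := f1 hlow hcov hdiff r0
      omega
    have hpair : ({u, v} : Set (P L)).ncard = 2 := Set.ncard_pair huv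
    exact (Set.eq_of_subset_of_ncard_le hsub (by omega)
      ((SL_finite hlow r0).subset (maxs_subset _))).symm
  have hSLeq : SL r0 = Set.Iic u ∪ Set.Iic v := by
    apply Set.Subset.antisymm
    · intro z hz
      obtain ⟨w, hw, hzw⟩ := exists_maxs_above (SL_finite hlow r0) hz
      rw [hMr] at hw
      rcases hw with rfl | hw
      · exact Or.inl hzw
      · rw [Set.mem_singleton_iff] at hw
        subst hw
        exact Or.inr hzw
    · rintro z (hz | hz)
      · exact lt_of_le_of_lt hz hur0
      · exact lt_of_le_of_lt hz hvr0
  refine ⟨r0, hSLeq, ?_⟩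
  intro r' hr'
  have hr'A : r' ∈ A \ B := by
    have hvr' : v < r' := by
      have : v ∈ SL r' := by rw [hr']; exact Or.inr (Set.mem_Iic.2 le_rfl)
      exact this
    have hSLr' : SL r' ⊆ Γ.S := by
      intro q hq
      rw [hr'] at hq
      rcases hq with hq | hq
      · exact Γ.S_lower (Set.mem_Iic.1 hq) huS
      · exact Γ.S_lower (Set.mem_Iic.1 hq) hvS
    refine ⟨⟨hvr', hSLr'⟩, ?_⟩
    rintro ⟨-, h2⟩
    have huin : u ∈ SL r' := by rw [hr']; exact Or.inl (Set.mem_Iic.2 le_rfl)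
    exact (h2 huin).2 rfl
  rw [hr0] at hr'A
  exact hr'A

lemma corner_unique {n : ℕ} (Γ : Grid L d (n+1)) (k : Fin d) :
    ∃! r : P L, SL r = Set.Iic (Γ.f k (n+1) 0) := by
  classical
  have hp := f1 hlow hcov hdiff (Γ.f k (n+1) 0)
  set p := Γ.f k (n+1) 0 with hpdef
  have hpsum : (n+1) + 0 ≤ n+1 := by omega
  have hMx : Maxs (SL p) = {Γ.f k n 0} := by
    apply Set.Subset.antisymm
    · rintro q ⟨hq1, hq2⟩
      obtain ⟨k2, x2, y2, h2, hq⟩ := Γ.dc hpsum q hq1.le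
      obtain ⟨hk2, hx2, hy2⟩ := (Γ.ord h2 hpsum).1 (hq.le.trans hq1.le)
      rw [hk2] at hq
      subst hq
      have hy0 : y2 = 0 := by omega
      subst hy0
      have hxn : x2 ≤ n := by
        rcases Nat.lt_or_ge x2 (n+1) with h | h
        · omega
        · exfalso
          have : x2 = n + 1 := by omega
          subst this
          exact lt_irrefl _ hq1
      rcases Nat.lt_or_ge x2 n with h | h
      · exfalso
        refine hq2 (Γ.f k (x2+1) 0) ?_ ?_
        · show Γ.f k (x2+1) 0 < p
          rw [hpdef, Γ.lt_iff (by omega) hpsum]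
          exact ⟨rfl, by omega, le_rfl, by omega⟩
        · rw [Γ.lt_iff (by omega) (by omega)]
          exact ⟨rfl, by omega, le_rfl, by omega⟩
      · have : x2 = n := by omega
        subst this
        rfl
    · rintro q hq
      rw [Set.mem_singleton_iff] at hq
      subst hq
      constructor
      · show Γ.f k n 0 < p
        rw [hpdef, Γ.lt_iff (by omega) hpsum]
        exact ⟨rfl, by omega, le_rfl, by omega⟩
      · intro w hw hlt
        obtain ⟨k3, x3, y3, h3, hw3⟩ := Γ.dc hpsum w hw.le
        obtain ⟨hk3, hx3, hy3⟩ := (Γ.ord h3 hpsum).1 (hw3.le.trans hw.le)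
        rw [hk3] at hw3
        subst hw3
        have hy0 : y3 = 0 := by omega
        subst hy0
        have hne : ¬(x3 = n + 1) := by
          intro h
          subst h
          exact lt_irrefl _ hw
        rw [Γ.lt_iff (by omega) h3] at hlt
        omega
  rw [hMx, Set.ncard_singleton] at hp
  have hext : {r : P L | SL r = Set.Iic p}.ncard = 1 := by omega
  obtain ⟨r0, hr0⟩ := Set.ncard_eq_one.1 hext
  refine ⟨r0, ?_, ?_⟩
  · have : r0 ∈ {r : P L | SL r = Set.Iic p} := by rw [hr0]; exact Set.mem_singleton _
    exact this
  · intro r' hr'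
    have : r' ∈ {r : P L | SL r = Set.Iic p} := hr'
    rw [hr0] at this
    exact this

lemma corner_uniqueY {n : ℕ} (Γ : Grid L d (n+1)) (k : Fin d) :
    ∃! r : P L, SL r = Set.Iic (Γ.f k 0 (n+1)) := by
  have hswap : ∃! r : P L, SL r = Set.Iic ((Grid.mk (L := L) (d := d) (n := n+1)
      (fun k i j => Γ.f k j i)
      (fun k i j k' i' j' h1 h2 => by rw [Γ.ord (by omega) (by omega)]; tauto)
      (fun k i j h q hq => by
        obtain ⟨k', i', j', h', hf⟩ := Γ.dc (show j + i ≤ n+1 by omega) q hq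
        exact ⟨k', j', i', by omega, hf⟩)
      (fun p hp => by
        obtain ⟨k', i', j', h', hf⟩ := Γ.cmpl p (fun q hq => by
          obtain ⟨k2, i2, j2, h2, hf2⟩ := hp q hq
          exact ⟨k2, j2, i2, by omega, hf2⟩)
        exact ⟨k', j', i', by omega, hf⟩)).f k (n+1) 0) := corner_unique hlow hcov hdiff _ k
  exact hswap

lemma step {n : ℕ} (Γ : Grid L d (n+1)) :
    ∃ Δ : Grid L d (n+2), ∀ k i j, i + j ≤ n + 1 → Δ.f k i j = Γ.f k i j := by
  classical
  have cx : ∀ k : Fin d, ∃! r : P L, SL r = Set.Iic (Γ.f k (n+1) 0) :=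
    fun k => corner_unique hlow hcov hdiff Γ k
  have cy : ∀ k : Fin d, ∃! r : P L, SL r = Set.Iic (Γ.f k 0 (n+1)) :=
    fun k => corner_uniqueY hlow hcov hdiff Γ k
  have cp : ∀ (k : Fin d) (a b : ℕ), a + b = n →
      ∃! r : P L, SL r = Set.Iic (Γ.f k (a+1) b) ∪ Set.Iic (Γ.f k a (b+1)) :=
    fun k a b h => pair_unique hlow hcov hdiff Γ (by omega)
  set F : Fin d → ℕ → ℕ → P L := fun k i j =>
    if h1 : i + j ≤ n + 1 then Γ.f k i j
    else if h2 : i + j = n + 2 then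
      (if hj : j = 0 then (cx k).exists.choose
       else if hi : i = 0 then (cy k).exists.choose
       else (cp k (i-1) (j-1) (by omega)).exists.choose)
    else Γ.f k 0 0 with hFdef
  have hFold : ∀ k i j, i + j ≤ n + 1 → F k i j = Γ.f k i j := by
    intro k i j h
    simp only [hFdef]
    rw [dif_pos h]
  have hFSL : ∀ k a b, a + b = n + 2 →
      SL (F k a b) = {q : P L | ∃ x y, x + y ≤ n + 1 ∧ x ≤ a ∧ y ≤ b ∧ Γ.f k x y = q} := by
    intro k a b h
    have hF : F k a b = (if hj : b = 0 then (cx k).exists.choose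
       else if hi : a = 0 then (cy k).exists.choose
       else (cp k (a-1) (b-1) (by omega)).exists.choose) := by
      simp only [hFdef]
      rw [dif_neg (by omega), dif_pos h]
    by_cases hj : b = 0
    · subst hj
      rw [hF, dif_pos rfl, (cx k).exists.choose_spec]
      ext q
      simp only [Set.mem_Iic, Set.mem_setOf_eq]
      constructor
      · intro hq
        obtain ⟨k2, x, y, h2, hq2⟩ := Γ.dc (show (n+1) + 0 ≤ n + 1 by omega) q hq
        obtain ⟨hk2, hx, hy⟩ := (Γ.ord h2 (by omega)).1 (hq2.le.trans hq)
        rw [hk2] at hq2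
        exact ⟨x, y, h2, by omega, by omega, hq2⟩
      · rintro ⟨x, y, h2, hx, hy, rfl⟩
        rw [Γ.ord h2 (by omega)]
        exact ⟨rfl, by omega, by omega⟩
    · by_cases hi : a = 0
      · subst hi
        rw [hF, dif_neg hj, dif_pos rfl, (cy k).exists.choose_spec]
        ext q
        simp only [Set.mem_Iic, Set.mem_setOf_eq]
        constructor
        · intro hq
          obtain ⟨k2, x, y, h2, hq2⟩ := Γ.dc (show 0 + (n+1) ≤ n + 1 by omega) q hq
          obtain ⟨hk2, hx, hy⟩ := (Γ.ord h2 (by omega)).1 (hq2.le.trans hq)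
          rw [hk2] at hq2
          exact ⟨x, y, h2, by omega, by omega, hq2⟩
        · rintro ⟨x, y, h2, hx, hy, rfl⟩
          rw [Γ.ord h2 (by omega)]
          exact ⟨rfl, by omega, by omega⟩
      · rw [hF, dif_neg hj, dif_neg hi, (cp k (a-1) (b-1) (by omega)).exists.choose_spec]
        have e1 : a - 1 + 1 = a := by omega
        have e2 : b - 1 + 1 = b := by omega
        rw [e1, e2]
        ext q
        simp only [Set.mem_union, Set.mem_Iic, Set.mem_setOf_eq]
        constructor
        · rintro (hq | hq)
          · obtain ⟨k2, x, y, h2, hq2⟩ := Γ.dc (show a + (b-1) ≤ n + 1 by omega) q hq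
            obtain ⟨hk2, hx, hy⟩ := (Γ.ord h2 (by omega)).1 (hq2.le.trans hq)
            rw [hk2] at hq2
            exact ⟨x, y, h2, by omega, by omega, hq2⟩
          · obtain ⟨k2, x, y, h2, hq2⟩ := Γ.dc (show (a-1) + b ≤ n + 1 by omega) q hq
            obtain ⟨hk2, hx, hy⟩ := (Γ.ord h2 (by omega)).1 (hq2.le.trans hq)
            rw [hk2] at hq2
            exact ⟨x, y, h2, by omega, by omega, hq2⟩
        · rintro ⟨x, y, h2, hx, hy, rfl⟩
          by_cases hyb : y ≤ b - 1
          · refine Or.inl ?_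
            rw [Γ.ord h2 (by omega)]
            exact ⟨rfl, by omega, by omega⟩
          · refine Or.inr ?_
            rw [Γ.ord h2 (by omega)]
            exact ⟨rfl, by omega, by omega⟩
  have hEsubS : ∀ k a b, a + b = n + 2 → SL (F k a b) ⊆ Γ.S := by
    intro k a b h q hq
    rw [hFSL k a b h] at hq
    obtain ⟨x, y, h2, -, -, rfl⟩ := hq
    exact Γ.mem_S h2
  have hWit : ∀ a b, a + b = n + 2 → ∃ wx wy, wx + wy = n + 1 ∧ wx ≤ a ∧ wy ≤ b := by
    intro a b h
    rcases le_or_gt a (n+1) with ha | ha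
    · exact ⟨a, n + 1 - a, by omega, by omega, by omega⟩
    · exact ⟨n+1, 0, by omega, by omega, by omega⟩
  have hFnotS : ∀ k a b, a + b = n + 2 → F k a b ∉ Γ.S := by
    intro k a b h hmem
    obtain ⟨wx, wy, hw1, hw2, hw3⟩ := hWit a b h
    have hwin : Γ.f k wx wy ∈ SL (F k a b) := by
      rw [hFSL k a b h]
      exact ⟨wx, wy, by omega, hw2, hw3, rfl⟩
    exact (Γ.diag_maxs hw1).2 _ hmem hwin
  have hFinj : ∀ k a b k' a' b', a + b = n + 2 → a' + b' = n + 2 →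
      F k a b = F k' a' b' → k = k' ∧ a = a' ∧ b = b' := by
    intro k a b k' a' b' h h' heq
    have hSL : SL (F k a b) = SL (F k' a' b') := by rw [heq]
    rw [hFSL k a b h, hFSL k' a' b' h'] at hSL
    obtain ⟨wx, wy, hw1, hw2, hw3⟩ := hWit a b h
    have hkk : k = k' := by
      have : Γ.f k wx wy ∈ {q : P L | ∃ x y, x + y ≤ n + 1 ∧ x ≤ a' ∧ y ≤ b' ∧ Γ.f k' x y = q} := by
        rw [← hSL]
        exact ⟨wx, wy, by omega, hw2, hw3, rfl⟩
      obtain ⟨x, y, h2, -, -, hh⟩ := this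
      exact ((Γ.inj h2 (by omega) hh).1).symm
    subst hkk
    have hT : ∀ x y, x + y ≤ n + 1 → ((x ≤ a ∧ y ≤ b) ↔ (x ≤ a' ∧ y ≤ b')) := by
      intro x y hxy
      constructor
      · intro hx
        have : Γ.f k x y ∈ {q : P L | ∃ x' y', x' + y' ≤ n + 1 ∧ x' ≤ a' ∧ y' ≤ b' ∧ Γ.f k x' y' = q} := by
          rw [← hSL]
          exact ⟨x, y, hxy, hx.1, hx.2, rfl⟩
        obtain ⟨x2, y2, h2, hx2, hy2, hh⟩ := this
        obtain ⟨-, e1, e2⟩ := Γ.inj h2 hxy hh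
        omega
      · intro hx
        have : Γ.f k x y ∈ {q : P L | ∃ x' y', x' + y' ≤ n + 1 ∧ x' ≤ a ∧ y' ≤ b ∧ Γ.f k x' y' = q} := by
          rw [hSL]
          exact ⟨x, y, hxy, hx.1, hx.2, rfl⟩
        obtain ⟨x2, y2, h2, hx2, hy2, hh⟩ := this
        obtain ⟨-, e1, e2⟩ := Γ.inj h2 hxy hh
        omega
    have i1 := hT (min a (n+1)) (n + 1 - min a (n+1)) (by omega)
    have i2 := hT (min a' (n+1)) (n + 1 - min a' (n+1)) (by omega)
    have i3 := hT (min b (n+1)) 0 (by omega)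
    have i4 := hT 0 (min b (n+1)) (by omega)
    have i5 := hT (n+1) 0 (by omega)
    have i6 := hT 0 (n+1) (by omega)
    have i7 := hT n 1 (by omega)
    have i8 := hT 1 n (by omega)
    refine ⟨rfl, ?_, ?_⟩ <;> omega
  refine ⟨⟨F, ?_, ?_, ?_⟩, fun k i j h => hFold k i j h⟩
  · -- ord
    intro k i j k' i' j' h1 h2
    rcases le_or_gt (i + j) (n+1) with ho1 | ho1 <;>
      rcases le_or_gt (i' + j') (n+1) with ho2 | ho2
    · rw [hFold k i j ho1, hFold k' i' j' ho2]
      exact Γ.ord ho1 ho2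
    · -- old vs new
      have hs2 : i' + j' = n + 2 := by omega
      rw [hFold k i j ho1]
      constructor
      · intro hle
        have hne : Γ.f k i j ≠ F k' i' j' := by
          intro hh
          exact hFnotS k' i' j' hs2 (hh ▸ Γ.mem_S ho1)
        have hlt : Γ.f k i j ∈ SL (F k' i' j') := lt_of_le_of_ne hle (fun hh => hne (Subtype.ext hh))
        rw [hFSL k' i' j' hs2] at hlt
        obtain ⟨x, y, hxy, hx, hy, hh⟩ := hlt
        obtain ⟨e0, e1, e2⟩ := Γ.inj hxy ho1 hh
        exact ⟨e0.symm ▸ rfl, by omega, by omega⟩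
      · rintro ⟨rfl, hii, hjj⟩
        have : Γ.f k i j ∈ SL (F k i' j') := by
          rw [hFSL k i' j' hs2]
          exact ⟨i, j, ho1, hii, hjj, rfl⟩
        exact le_of_lt this
    · -- new vs old
      have hs1 : i + j = n + 2 := by omega
      rw [hFold k' i' j' ho2]
      constructor
      · intro hle
        exfalso
        exact hFnotS k i j hs1 (Γ.S_lower hle (Γ.mem_S ho2))
      · rintro ⟨rfl, hii, hjj⟩
        omega
    · -- new vs new
      have hs1 : i + j = n + 2 := by omega
      have hs2 : i' + j' = n + 2 := by omega
      constructor
      · intro hle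
        rcases eq_or_lt_of_le hle with heq | hlt
        · obtain ⟨e0, e1, e2⟩ := hFinj k i j k' i' j' hs1 hs2 heq
          exact ⟨e0, by omega, by omega⟩
        · exfalso
          exact hFnotS k i j hs1 (hEsubS k' i' j' hs2 hlt)
      · rintro ⟨rfl, hii, hjj⟩
        have : i = i' ∧ j = j' := by omega
        rw [this.1, this.2]
  · -- dc
    intro k i j h q hq
    rcases le_or_gt (i + j) (n+1) with ho | ho
    · rw [hFold k i j ho] at hq
      obtain ⟨k', i', j', h', hf⟩ := Γ.dc ho q hq
      exact ⟨k', i', j', by omega, by rw [hFold k' i' j' h']; exact hf⟩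
    · have hs : i + j = n + 2 := by omega
      rcases eq_or_lt_of_le hq with heq | hlt
      · exact ⟨k, i, j, by omega, heq.symm⟩
      · have : q ∈ SL (F k i j) := hlt
        rw [hFSL k i j hs] at this
        obtain ⟨x, y, hxy, hx, hy, hf⟩ := this
        exact ⟨k, x, y, by omega, by rw [hFold k x y hxy]; exact hf⟩
  · -- cmpl
    intro p hp
    have hSLp : SL p ⊆ Γ.S := by
      intro q hq
      obtain ⟨k, i, j, hij, hf⟩ := hp q hq
      have hij' : i + j ≤ n + 1 := by omega
      rw [hFold k i j hij'] at hf
      exact hf ▸ Γ.mem_S hij'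
    by_cases hpS : p ∈ Γ.S
    · obtain ⟨k, i, j, hij, hf⟩ := hpS
      exact ⟨k, i, j, by omega, by rw [hFold k i j hij]; exact hf⟩
    · have hpAdds : p ∈ Adds Γ.S := ⟨hpS, fun q hq => hSLp hq⟩
      -- Adds Γ.S is exactly the set of new elements
      set NewSet := (fun t : Fin d × Fin (n+3) => F t.1 t.2 (n + 2 - t.2)) '' Set.univ with hNS
      have hNsub : NewSet ⊆ Adds Γ.S := by
        rintro r ⟨⟨k, a⟩, -, rfl⟩
        have hs : (a : ℕ) + (n + 2 - a) = n + 2 := by omega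
        refine ⟨hFnotS k a (n+2-a) hs, fun q hq => hEsubS k a (n+2-a) hs hq⟩
      have hNcard : NewSet.ncard = d * (n + 3) := by
        rw [hNS, Set.ncard_image_of_injOn, Set.ncard_univ, Nat.card_eq_fintype_card]
        · simp [Fintype.card_prod, mul_comm]
        · rintro ⟨k, a⟩ - ⟨k', a'⟩ - hfeq
          obtain ⟨e0, e1, -⟩ := hFinj k a (n+2-a) k' a' (n+2-a') (by omega) (by omega) hfeq
          simp only [Prod.mk.injEq]
          exact ⟨e0, Fin.ext e1⟩
      obtain ⟨hAfin, hAcard⟩ := star hlow hcov hdiff Γ.S_finite Γ.S_lower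
      have hMcard : (Maxs Γ.S).ncard = d * (n + 2) := Γ.maxs_ncard
      have hEq : Adds Γ.S = NewSet := by
        refine (Set.eq_of_subset_of_ncard_le hNsub ?_ hAfin).symm
        rw [hNcard, hAcard, hMcard]
        ring_nf
        omega
      rw [hEq] at hpAdds
      obtain ⟨⟨k, a⟩, -, hf⟩ := hpAdds
      exact ⟨k, a, n + 2 - a, by omega, hf⟩

lemma base : Nonempty (Grid L d 1) := by
  classical
  have hls0 : IsLowerSet (∅ : Set (P L)) := fun a b _ hb => absurd hb (Set.notMem_empty a)
  obtain ⟨hA0fin, hA0c⟩ := star hlow hcov hdiff Set.finite_empty hls0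
  have hM0 : Maxs (∅ : Set (P L)) = ∅ := Set.eq_empty_of_subset_empty (maxs_subset _)
  have hA0card : (Adds (∅ : Set (P L))).ncard = d := by
    rw [hA0c, hM0]
    simp
  have hcard : hA0fin.toFinset.card = d := by
    rw [← Set.ncard_eq_toFinset_card _ hA0fin]
    exact hA0card
  set e := hA0fin.toFinset.equivFinOfCardEq hcard with he
  set m : Fin d → P L := fun k => (e.symm k : P L) with hm
  have hmAdds : ∀ k, m k ∈ Adds (∅ : Set (P L)) := by
    intro k
    have h2 := (e.symm k).2
    rw [Set.Finite.mem_toFinset] at h2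
    exact h2
  have hmin : ∀ (k : Fin d) (q : P L), ¬ q < m k := by
    intro k q h
    exact absurd ((hmAdds k).2 q h) (Set.notMem_empty q)
  have hminj : Function.Injective m := by
    intro k k' h
    have : e.symm k = e.symm k' := Subtype.ext h
    exact e.symm.injective this
  have hmsurj : ∀ p ∈ Adds (∅ : Set (P L)), ∃ k, m k = p := by
    intro p hp
    refine ⟨e ⟨p, by simpa [Set.Finite.mem_toFinset] using hp⟩, ?_⟩
    simp [hm]
  have hSLm : ∀ k, SL (m k) = ∅ := by
    intro k
    ext q
    simp only [SL, Set.mem_setOf_eq, Set.mem_empty_iff_false, iff_false]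
    exact hmin k q
  have hIicm : ∀ k, Set.Iic (m k) = {m k} := by
    intro k
    ext q
    simp only [Set.mem_Iic, Set.mem_singleton_iff]
    constructor
    · intro h
      rcases eq_or_lt_of_le h with h' | h'
      · exact h'
      · exact absurd h' (hmin k q)
    · intro h
      exact h.le
  have hIic_inj : ∀ k k', Set.Iic (m k) = Set.Iic (m k') → k = k' := by
    intro k k' h
    apply hminj
    have : m k ∈ Set.Iic (m k') := h ▸ Set.mem_Iic.2 le_rfl
    have h2 : m k' ∈ Set.Iic (m k) := h.symm ▸ Set.mem_Iic.2 le_rfl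
    exact le_antisymm (Set.mem_Iic.1 this) (Set.mem_Iic.1 h2)
  have hext : ∀ k : Fin d, ∃ rr : P L × P L, rr.1 ≠ rr.2 ∧
      {r : P L | SL r = Set.Iic (m k)} = {rr.1, rr.2} := by
    intro k
    have hf1 := f1 hlow hcov hdiff (m k)
    rw [hSLm k, hM0] at hf1
    simp only [Set.ncard_empty, add_zero] at hf1
    obtain ⟨a, b, hab, hset⟩ := Set.ncard_eq_two.1 hf1
    exact ⟨(a, b), hab, hset⟩
  choose rr hrrne hrrset using hext
  set r1 : Fin d → P L := fun k => (rr k).1 with hr1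
  set r2 : Fin d → P L := fun k => (rr k).2 with hr2
  have hSLr1 : ∀ k, SL (r1 k) = Set.Iic (m k) := by
    intro k
    have : r1 k ∈ {r : P L | SL r = Set.Iic (m k)} := by
      rw [hrrset k]
      exact Or.inl rfl
    exact this
  have hSLr2 : ∀ k, SL (r2 k) = Set.Iic (m k) := by
    intro k
    have : r2 k ∈ {r : P L | SL r = Set.Iic (m k)} := by
      rw [hrrset k]
      exact Or.inr rfl
    exact this
  have hmr1lt : ∀ k, m k < r1 k := by
    intro k
    have : m k ∈ SL (r1 k) := by rw [hSLr1 k]; exact Set.mem_Iic.2 le_rfl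
    exact this
  have hmr2lt : ∀ k, m k < r2 k := by
    intro k
    have : m k ∈ SL (r2 k) := by rw [hSLr2 k]; exact Set.mem_Iic.2 le_rfl
    exact this
  have hr1nm : ∀ k k', r1 k ≠ m k' := by
    intro k k' h
    exact hmin k' (m k) (h ▸ hmr1lt k)
  have hr2nm : ∀ k k', r2 k ≠ m k' := by
    intro k k' h
    exact hmin k' (m k) (h ▸ hmr2lt k)
  have hle_min : ∀ (q : P L) k, q ≤ m k ↔ q = m k := by
    intro q k
    constructor
    · intro h
      rcases eq_or_lt_of_le h with h' | h'
      · exact h'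
      · exact absurd h' (hmin k q)
    · intro h
      exact h.le
  have hle_r1 : ∀ (q : P L) k, q ≤ r1 k ↔ q = r1 k ∨ q = m k := by
    intro q k
    constructor
    · intro h
      rcases eq_or_lt_of_le h with h' | h'
      · exact Or.inl h'
      · have : q ∈ SL (r1 k) := h'
        rw [hSLr1 k] at this
        exact Or.inr ((hle_min q k).1 (Set.mem_Iic.1 this))
    · rintro (rfl | rfl)
      · exact le_rfl
      · exact (hmr1lt k).le
  have hle_r2 : ∀ (q : P L) k, q ≤ r2 k ↔ q = r2 k ∨ q = m k := by
    intro q k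
    constructor
    · intro h
      rcases eq_or_lt_of_le h with h' | h'
      · exact Or.inl h'
      · have : q ∈ SL (r2 k) := h'
        rw [hSLr2 k] at this
        exact Or.inr ((hle_min q k).1 (Set.mem_Iic.1 this))
    · rintro (rfl | rfl)
      · exact le_rfl
      · exact (hmr2lt k).le
  have hr1_inj : ∀ k k', r1 k = r1 k' → k = k' := by
    intro k k' h
    apply hIic_inj
    rw [← hSLr1 k, ← hSLr1 k', h]
  have hr2_inj : ∀ k k', r2 k = r2 k' → k = k' := by
    intro k k' h
    apply hIic_inj
    rw [← hSLr2 k, ← hSLr2 k', h]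
  have hr1nr2 : ∀ k k', r1 k ≠ r2 k' := by
    intro k k' h
    have hkk : k = k' := by
      apply hIic_inj
      rw [← hSLr1 k, ← hSLr2 k', h]
    subst hkk
    exact hrrne k h
  -- the nine order facts
  have omm : ∀ k k', m k ≤ m k' ↔ k = k' := by
    intro k k'
    rw [hle_min]
    exact ⟨fun h => hminj h, fun h => h ▸ rfl⟩
  have omr1 : ∀ k k', m k ≤ r1 k' ↔ k = k' := by
    intro k k'
    rw [hle_r1]
    constructor
    · rintro (h | h)
      · exact absurd h.symm (hr1nm k' k)
      · exact hminj h
    · rintro rfl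
      exact Or.inr rfl
  have omr2 : ∀ k k', m k ≤ r2 k' ↔ k = k' := by
    intro k k'
    rw [hle_r2]
    constructor
    · rintro (h | h)
      · exact absurd h.symm (hr2nm k' k)
      · exact hminj h
    · rintro rfl
      exact Or.inr rfl
  have or1m : ∀ k k', ¬ (r1 k ≤ m k') := by
    intro k k' h
    exact hr1nm k k' ((hle_min _ k').1 h)
  have or2m : ∀ k k', ¬ (r2 k ≤ m k') := by
    intro k k' h
    exact hr2nm k k' ((hle_min _ k').1 h)
  have or1r1 : ∀ k k', r1 k ≤ r1 k' ↔ k = k' := by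
    intro k k'
    rw [hle_r1]
    constructor
    · rintro (h | h)
      · exact hr1_inj _ _ h
      · exact absurd h (hr1nm k k')
    · rintro rfl
      exact Or.inl rfl
  have or2r2 : ∀ k k', r2 k ≤ r2 k' ↔ k = k' := by
    intro k k'
    rw [hle_r2]
    constructor
    · rintro (h | h)
      · exact hr2_inj _ _ h
      · exact absurd h (hr2nm k k')
    · rintro rfl
      exact Or.inl rfl
  have or1r2 : ∀ k k', ¬ (r1 k ≤ r2 k') := by
    intro k k' h
    rcases (hle_r2 _ k').1 h with h' | h'
    · exact hr1nr2 k k' h'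
    · exact hr1nm k k' h'
  have or2r1 : ∀ k k', ¬ (r2 k ≤ r1 k') := by
    intro k k' h
    rcases (hle_r1 _ k').1 h with h' | h'
    · exact hr1nr2 k' k h'.symm
    · exact hr2nm k k' h'
  set f : Fin d → ℕ → ℕ → P L := fun k i j =>
    if i = 0 then (if j = 0 then m k else r2 k) else r1 k with hf
  have hf00 : ∀ k, f k 0 0 = m k := fun k => rfl
  have hf10 : ∀ k, f k 1 0 = r1 k := fun k => rfl
  have hf01 : ∀ k, f k 0 1 = r2 k := fun k => rfl
  refine ⟨⟨f, ?_, ?_, ?_⟩⟩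
  · intro k i j k' i' j' h1 h2
    have hc1 : (i = 0 ∧ j = 0) ∨ (i = 1 ∧ j = 0) ∨ (i = 0 ∧ j = 1) := by omega
    have hc2 : (i' = 0 ∧ j' = 0) ∨ (i' = 1 ∧ j' = 0) ∨ (i' = 0 ∧ j' = 1) := by omega
    rcases hc1 with ⟨rfl, rfl⟩ | ⟨rfl, rfl⟩ | ⟨rfl, rfl⟩ <;>
      rcases hc2 with ⟨rfl, rfl⟩ | ⟨rfl, rfl⟩ | ⟨rfl, rfl⟩ <;>
      simp only [hf00, hf10, hf01, omm, omr1, omr2, or1r1, or2r2]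
    · omega
    · omega
    · omega
    · constructor
      · intro h
        exact absurd h (or1m k k')
      · omega
    · omega
    · constructor
      · intro h
        exact absurd h (or1r2 k k')
      · omega
    · constructor
      · intro h
        exact absurd h (or2m k k')
      · omega
    · constructor
      · intro h
        exact absurd h (or2r1 k k')
      · omega
    · omega
  · intro k i j h q hq
    have hc1 : (i = 0 ∧ j = 0) ∨ (i = 1 ∧ j = 0) ∨ (i = 0 ∧ j = 1) := by omega
    rcases hc1 with ⟨rfl, rfl⟩ | ⟨rfl, rfl⟩ | ⟨rfl, rfl⟩
    · rw [hf00] at hq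
      exact ⟨k, 0, 0, by omega, by rw [hf00]; exact ((hle_min q k).1 hq).symm⟩
    · rw [hf10] at hq
      rcases (hle_r1 q k).1 hq with h' | h'
      · exact ⟨k, 1, 0, by omega, by rw [hf10]; exact h'.symm⟩
      · exact ⟨k, 0, 0, by omega, by rw [hf00]; exact h'.symm⟩
    · rw [hf01] at hq
      rcases (hle_r2 q k).1 hq with h' | h'
      · exact ⟨k, 0, 1, by omega, by rw [hf01]; exact h'.symm⟩
      · exact ⟨k, 0, 0, by omega, by rw [hf00]; exact h'.symm⟩
  · intro p hp
    by_cases hpmin : ∀ q : P L, ¬ q < p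
    · obtain ⟨k, hk⟩ := hmsurj p ⟨Set.notMem_empty p, fun q hq => absurd hq (hpmin q)⟩
      exact ⟨k, 0, 0, by omega, by rw [hf00]; exact hk⟩
    · push_neg at hpmin
      have hSLp : ∀ q : P L, q < p → ∃ k, m k = q := by
        intro q hq
        obtain ⟨k, i, j, hij, hfq⟩ := hp q hq
        have : i = 0 ∧ j = 0 := by omega
        obtain ⟨rfl, rfl⟩ := this
        exact ⟨k, hfq⟩
      set S0 : Set (P L) := Set.range m with hS0
      have hS0fin : S0.Finite := Set.finite_range m
      have hS0ls : IsLowerSet S0 := by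
        rintro a b hba ⟨k, rfl⟩
        exact ⟨k, ((hle_min b k).1 hba).symm⟩
      have hpS0 : p ∉ S0 := by
        rintro ⟨k, rfl⟩
        obtain ⟨q, hq⟩ := hpmin
        exact hmin k q hq
      have hpAdds : p ∈ Adds S0 := by
        refine ⟨hpS0, fun q hq => ?_⟩
        obtain ⟨k, hk⟩ := hSLp q hq
        exact ⟨k, hk⟩
      have hMS0 : Maxs S0 = S0 := by
        apply Set.Subset.antisymm (maxs_subset _)
        rintro q ⟨k, rfl⟩
        refine ⟨⟨k, rfl⟩, ?_⟩
        rintro w ⟨k', rfl⟩ hlt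
        have hkk : k = k' := (omm k k').1 hlt.le
        subst hkk
        exact lt_irrefl _ hlt
      have hS0card : S0.ncard = d := by
        rw [hS0, ← Set.image_univ, Set.ncard_image_of_injOn hminj.injOn, Set.ncard_univ]
        simp
      obtain ⟨hA1fin, hA1c⟩ := star hlow hcov hdiff hS0fin hS0ls
      have hA1card : (Adds S0).ncard = 2 * d := by
        rw [hA1c, hMS0, hS0card]
        omega
      set NS : Set (P L) := (fun t : Fin d × Bool => if t.2 then r1 t.1 else r2 t.1) '' Set.univ
        with hNS
      have hNSsub : NS ⊆ Adds S0 := by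
        rintro r ⟨⟨k, ε⟩, -, rfl⟩
        cases ε
        · simp only [Bool.false_eq_true, if_false]
          refine ⟨fun h => ?_, fun q hq => ?_⟩
          · obtain ⟨k', hk'⟩ := h
            exact hr2nm k k' hk'.symm
          · have : q ∈ SL (r2 k) := hq
            rw [hSLr2 k] at this
            exact ⟨k, ((hle_min q k).1 (Set.mem_Iic.1 this)).symm⟩
        · simp only [if_true]
          refine ⟨fun h => ?_, fun q hq => ?_⟩
          · obtain ⟨k', hk'⟩ := h
            exact hr1nm k k' hk'.symm
          · have : q ∈ SL (r1 k) := hq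
            rw [hSLr1 k] at this
            exact ⟨k, ((hle_min q k).1 (Set.mem_Iic.1 this)).symm⟩
      have hNScard : NS.ncard = 2 * d := by
        rw [hNS, Set.ncard_image_of_injOn, Set.ncard_univ]
        · simp [Fintype.card_prod]
          ring
        · rintro ⟨k, ε⟩ - ⟨k', ε'⟩ - h
          simp only at h
          cases ε <;> cases ε' <;> simp only [if_true, Bool.false_eq_true, if_false] at h
          · simp only [Prod.mk.injEq]
            exact ⟨hr2_inj _ _ h, trivial⟩
          · exact absurd h.symm (hr1nr2 k' k)
          · exact absurd h (hr1nr2 k k')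
          · simp only [Prod.mk.injEq]
            exact ⟨hr1_inj _ _ h, trivial⟩
      have hEq : Adds S0 = NS := by
        refine (Set.eq_of_subset_of_ncard_le hNSsub ?_ hA1fin).symm
        rw [hNScard, hA1card]
      rw [hEq] at hpAdds
      obtain ⟨⟨k, ε⟩, -, hfp⟩ := hpAdds
      cases ε
      · simp only [Bool.false_eq_true, if_false] at hfp
        exact ⟨k, 0, 1, by omega, by rw [hf01]; exact hfp⟩
      · simp only [if_true] at hfp
        exact ⟨k, 1, 0, by omega, by rw [hf10]; exact hfp⟩

lemma glue : ∃ g : Fin d → ℕ → ℕ → P L,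
    (∀ k i j k' i' j', g k i j ≤ g k' i' j' ↔ (k = k' ∧ i ≤ i' ∧ j ≤ j')) ∧
    (∀ p : P L, ∃ k i j, g k i j = p) := by
  classical
  obtain ⟨Γ0⟩ := base hlow hcov hdiff
  choose stepF stepH using fun (n : ℕ) (Γ : Grid L d (n+1)) => step hlow hcov hdiff Γ
  set G : ∀ n : ℕ, Grid L d (n+1) := fun n => Nat.rec Γ0 (fun n Γ => stepF n Γ) n with hG
  have hagree : ∀ n k i j, i + j ≤ n + 1 → (G (n+1)).f k i j = (G n).f k i j := by
    intro n k i j h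
    exact stepH n (G n) k i j h
  have hagree2 : ∀ n m k i j, n ≤ m → i + j ≤ n + 1 → (G m).f k i j = (G n).f k i j := by
    intro n m k i j hnm hij
    induction m with
    | zero =>
      have : n = 0 := by omega
      subst this
      rfl
    | succ m ih =>
      rcases eq_or_lt_of_le hnm with rfl | hlt
      · rfl
      · rw [hagree m k i j (by omega)]
        exact ih (by omega)
  set g : Fin d → ℕ → ℕ → P L := fun k i j => (G (i + j)).f k i j with hg
  have hord : ∀ k i j k' i' j', g k i j ≤ g k' i' j' ↔ (k = k' ∧ i ≤ i' ∧ j ≤ j') := by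
    intro k i j k' i' j'
    set N := max (i + j) (i' + j') with hN
    have e1 : (G N).f k i j = g k i j := hagree2 (i+j) N k i j (by omega) (by omega)
    have e2 : (G N).f k' i' j' = g k' i' j' := hagree2 (i'+j') N k' i' j' (by omega) (by omega)
    rw [← e1, ← e2]
    exact (G N).ord (by omega) (by omega)
  refine ⟨g, hord, ?_⟩
  have hclaim : ∀ N : ℕ, ∀ p : P L, (SL p).ncard ≤ N →
      ∃ k i j, i + j ≤ N + 1 ∧ (G N).f k i j = p := by
    intro N
    induction N with
    | zero =>
      intro p hp
      have hSLe : SL p = ∅ := by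
        have hfin := SL_finite hlow p
        rw [← Set.ncard_eq_zero hfin] at *
        omega
      refine (G 0).cmpl p (fun q hq => ?_)
      exfalso
      have : q ∈ SL p := hq
      rw [hSLe] at this
      exact this
    | succ N ih =>
      intro p hp
      refine (G (N+1)).cmpl p (fun q hq => ?_)
      have hql : (SL q).ncard < (SL p).ncard := by
        apply Set.ncard_lt_ncard
        · constructor
          · intro z hz
            exact lt_trans hz hq
          · intro hsub
            exact lt_irrefl q (hsub hq)
        · exact SL_finite hlow p
      obtain ⟨k, i, j, hij, hf⟩ := ih q (by omega)
      refine ⟨k, i, j, by omega, ?_⟩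
      rw [hagree N k i j hij]
      exact hf
  intro p
  obtain ⟨k, i, j, hij, hf⟩ := hclaim ((SL p).ncard) p le_rfl
  refine ⟨k, i, j, ?_⟩
  set N := (SL p).ncard with hN
  set M := max N (i + j) with hM
  have e1 : (G M).f k i j = (G N).f k i j := hagree2 N M k i j (by omega) hij
  have e2 : (G M).f k i j = g k i j := hagree2 (i+j) M k i j (by omega) (by omega)
  rw [← e2, e1, hf]

lemma final : Nonempty (L ≃o (Fin d → YoungDiagram)) := by
  classical
  obtain ⟨g, hord, hsurj⟩ := glue hlow hcov hdiff
  have hginj : ∀ {k i j k' i' j'}, g k i j = g k' i' j' → k = k' ∧ i = i' ∧ j = j' := by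
    intro k i j k' i' j' h
    have e1 := (hord k i j k' i' j').1 h.le
    have e2 := (hord k' i' j' k i j).1 h.ge
    exact ⟨e1.1, by omega, by omega⟩
  have hcellsfin : ∀ (x : L) (k : Fin d), {c : ℕ × ℕ | (g k c.1 c.2 : L) ≤ x}.Finite := by
    intro x k
    have heq : {c : ℕ × ℕ | (g k c.1 c.2 : L) ≤ x}
        = (fun c : ℕ × ℕ => (g k c.1 c.2 : L)) ⁻¹' {y : L | y ≤ x} := rfl
    rw [heq]
    apply Set.Finite.preimage _ (hlow x)
    intro c _ c' _ h
    obtain ⟨-, e1, e2⟩ := hginj (Subtype.ext h)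
    exact Prod.ext e1 e2
  have hlower : ∀ (x : L) (k : Fin d), IsLowerSet ((hcellsfin x k).toFinset : Set (ℕ × ℕ)) := by
    intro x k c' c hcc' hc'
    rw [Set.Finite.coe_toFinset, Set.mem_setOf_eq] at hc' ⊢
    refine le_trans ?_ hc'
    show (g k c.1 c.2 : L) ≤ (g k c'.1 c'.2 : L)
    have : g k c.1 c.2 ≤ g k c'.1 c'.2 := (hord _ _ _ _ _ _).2 ⟨rfl, hcc'.1, hcc'.2⟩
    exact this
  set toF : L → (Fin d → YoungDiagram) := fun x k => ⟨(hcellsfin x k).toFinset, hlower x k⟩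
    with htoF
  have hmem : ∀ (x : L) (k : Fin d) (c : ℕ × ℕ),
      c ∈ (toF x k).cells ↔ (g k c.1 c.2 : L) ≤ x := by
    intro x k c
    simp [htoF, Set.Finite.mem_toFinset]
  set invF : (Fin d → YoungDiagram) → L :=
    fun μ => Finset.univ.sup (fun k => (μ k).cells.sup (fun c => (g k c.1 c.2 : L)))
    with hinvF
  have hle1 : ∀ (q : P L) (μ : Fin d → YoungDiagram),
      (q : L) ≤ invF μ ↔ ∃ k, ∃ c ∈ (μ k).cells, (q : L) ≤ (g k c.1 c.2 : L) := by
    intro q μ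
    simp only [hinvF]
    constructor
    · intro h
      obtain ⟨k, -, hk⟩ := (prime q).le_finset_sup.1 h
      obtain ⟨c, hc, hqc⟩ := (prime q).le_finset_sup.1 hk
      exact ⟨k, c, hc, hqc⟩
    · rintro ⟨k, c, hc, hqc⟩
      have h1 : (g k c.1 c.2 : L) ≤ (μ k).cells.sup (fun c => (g k c.1 c.2 : L)) :=
        Finset.le_sup (f := fun c : ℕ × ℕ => (g k c.1 c.2 : L)) hc
      have h2 : (μ k).cells.sup (fun c => (g k c.1 c.2 : L)) ≤
          Finset.univ.sup (fun k => (μ k).cells.sup (fun c => (g k c.1 c.2 : L))) :=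
        Finset.le_sup (f := fun k : Fin d => (μ k).cells.sup (fun c => (g k c.1 c.2 : L)))
          (Finset.mem_univ k)
      exact le_trans hqc (le_trans h1 h2)
  have hinvle : ∀ (μ : Fin d → YoungDiagram) (x : L),
      invF μ ≤ x ↔ ∀ k, ∀ c ∈ (μ k).cells, (g k c.1 c.2 : L) ≤ x := by
    intro μ x
    simp only [hinvF]
    constructor
    · intro h k c hc
      have h1 : (g k c.1 c.2 : L) ≤ (μ k).cells.sup (fun c => (g k c.1 c.2 : L)) :=
        Finset.le_sup (f := fun c : ℕ × ℕ => (g k c.1 c.2 : L)) hc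
      have h2 : (μ k).cells.sup (fun c => (g k c.1 c.2 : L)) ≤
          Finset.univ.sup (fun k => (μ k).cells.sup (fun c => (g k c.1 c.2 : L))) :=
        Finset.le_sup (f := fun k : Fin d => (μ k).cells.sup (fun c => (g k c.1 c.2 : L)))
          (Finset.mem_univ k)
      exact le_trans (le_trans h1 h2) h
    · intro h
      refine Finset.sup_le fun k _ => Finset.sup_le fun c hc => h k c hc
  have hri : ∀ μ, toF (invF μ) = μ := by
    intro μ
    funext k
    apply YoungDiagram.ext
    apply Finset.ext
    intro c
    rw [hmem (invF μ) k c, hle1]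
    constructor
    · rintro ⟨k', c', hc', hle⟩
      obtain ⟨hk, h1, h2⟩ := (hord _ _ _ _ _ _).1 hle
      subst hk
      have hc'' : (c'.1, c'.2) ∈ μ k := by
        rw [Prod.mk.eta]
        exact (YoungDiagram.mem_cells c').1 hc'
      have hcc : (c.1, c.2) ∈ μ k := YoungDiagram.up_left_mem (μ k) h1 h2 hc''
      rw [Prod.mk.eta] at hcc
      exact (YoungDiagram.mem_cells c).2 hcc
    · intro hc
      exact ⟨k, c, hc, le_rfl⟩
  have hli : ∀ x, invF (toF x) = x := by
    intro x
    apply le_antisymm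
    · rw [hinvle]
      intro k c hc
      rw [hmem] at hc
      exact hc
    · apply le_of_Sx_subset hlow
      intro p hp
      obtain ⟨k, i, j, rfl⟩ := hsurj p
      have hcell : (i, j) ∈ (toF x k).cells := by
        rw [hmem]
        exact hp
      show (g k i j : L) ≤ invF (toF x)
      rw [hle1]
      exact ⟨k, (i, j), hcell, le_rfl⟩
  have hmr : ∀ {x y : L}, toF x ≤ toF y ↔ x ≤ y := by
    intro x y
    constructor
    · intro h
      apply le_of_Sx_subset hlow
      intro p hp
      obtain ⟨k, i, j, rfl⟩ := hsurj p
      have hcell : (i, j) ∈ (toF x k).cells := by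
        rw [hmem]
        exact hp
      have hcy : (i, j) ∈ (toF y k).cells :=
        (YoungDiagram.mem_cells _).2 (h k ((YoungDiagram.mem_cells _).1 hcell))
      rw [hmem] at hcy
      exact hcy
    · intro h k
      intro c hc
      have hcx : c ∈ (toF x k).cells := (YoungDiagram.mem_cells c).2 hc
      rw [hmem] at hcx
      have hcy : c ∈ (toF y k).cells := by
        rw [hmem]
        exact le_trans hcx h
      exact (YoungDiagram.mem_cells c).1 hcy
  exact ⟨⟨⟨toF, invF, hli, hri⟩, hmr⟩⟩

end Covers

end UDDL


/-- Let `d` be a positive integer and let `L` be a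
distributive lattice with a least element in which every principal lower set
is finite, every element has finitely many covers, and for every element the
number of covers equals the number of lower covers plus `d`.  Then `L` is
order-isomorphic to `𝕐^{×d} = Fin d → YoungDiagram`, the `d`-fold cartesian
power of Young's lattice: `𝕐^{×d}` is the unique `d`-differential
finitary distributive lattice. -/
theorem unique_d_differential_distributive_lattice
    (d : ℕ) (hd : 0 < d) (L : Type*) [DistribLattice L] [OrderBot L]
    (hlow : ∀ x : L, {y : L | y ≤ x}.Finite)
    (hcov : ∀ x : L, {y : L | x ⋖ y}.Finite)
    (hdiff : ∀ x : L, {y : L | x ⋖ y}.ncard = {y : L | y ⋖ x}.ncard + d) :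
    Nonempty (L ≃o (Fin d → YoungDiagram)) := by
  exact UDDL.final hlow hcov hdiff
end
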